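/- arXiv:1103.5271 — 5 statements merged into one kernel-verified Lean document; each statement's English description precedes it below -/
import Mathlib

section
/- For every ε > 0 there exists C > 0 such that for every real N ≥ 1 and every v ∈ ℓ²(ℤ; ℂ): for each n ∈ ℤ the set of triples (n₁, n₂, n₃) ∈ ℤ³ with n = n₁ − n₂ + n₃, n₂ ≠ n₁, n₂ ≠ n₃, and |2(n − n₁)(n − n₃)| ≤ N is finite, and the function N₁₁(v)(n) := ∑ over this set of v_{n₁} · conj(v_{n₂}) · v_{n₃} belongs to ℓ²(ℤ; ℂ) with ‖N₁₁(v)‖ ≤ C N^{1/2 + ε} ‖v‖³. -/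
open scoped BigOperators ComplexConjugate

/-- The ℓ²(ℤ;ℂ) norm `(∑ₙ |vₙ|²)^{1/2}`. -/
noncomputable def l2norm (v : ℤ → ℂ) : ℝ := Real.sqrt (∑' n : ℤ, ‖v n‖ ^ 2)

/-- Membership in ℓ²(ℤ;ℂ). -/
def Memℓ2 (v : ℤ → ℂ) : Prop := Summable fun n : ℤ => ‖v n‖ ^ 2

/-- The phase `Φ = 2(n − n₁)(n − n₃)` for a triple `p = (n₁, n₂, n₃)`. -/
def phase (n : ℤ) (p : ℤ × ℤ × ℤ) : ℤ := 2 * (n - p.1) * (n - p.2.2)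

/-- The small-phase non-resonant condition: `n = n₁ − n₂ + n₃`, `n₂ ∉ {n₁, n₃}`,
`|2(n − n₁)(n − n₃)| ≤ N`. -/
def smallPhase (N : ℝ) (n : ℤ) (p : ℤ × ℤ × ℤ) : Prop :=
  n = p.1 - p.2.1 + p.2.2 ∧ p.2.1 ≠ p.1 ∧ p.2.1 ≠ p.2.2 ∧ |((phase n p : ℤ) : ℝ)| ≤ N

/-- The small-phase part `N₁₁(v)(n)` of the cubic nonlinearity. -/
noncomputable def N11 (N : ℝ) (v : ℤ → ℂ) (n : ℤ) : ℂ :=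
  ∑' p : {p : ℤ × ℤ × ℤ // smallPhase N n p}, v p.1.1 * conj (v p.1.2.1) * v p.1.2.2

open scoped Classical in
noncomputable def TT (N : ℝ) : Finset (ℤ × ℤ) :=
  (Finset.Icc (-(⌈N⌉₊:ℤ)) ⌈N⌉₊ ×ˢ Finset.Icc (-(⌈N⌉₊:ℤ)) ⌈N⌉₊).filter
    fun q => q.1 ≠ 0 ∧ q.2 ≠ 0 ∧ |((2 * q.1 * q.2 : ℤ) : ℝ)| ≤ N

lemma mem_TT {N : ℝ} {q : ℤ × ℤ} :
    q ∈ TT N ↔ q.1 ≠ 0 ∧ q.2 ≠ 0 ∧ |((2 * q.1 * q.2 : ℤ) : ℝ)| ≤ N := by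
  simp only [TT, Finset.mem_filter, Finset.mem_product, Finset.mem_Icc]
  constructor
  · tauto
  · rintro ⟨h1, h2, h3⟩
    have hb : ∀ x y : ℤ, x ≠ 0 → y ≠ 0 → |((2*x*y : ℤ):ℝ)| ≤ N → -(⌈N⌉₊:ℤ) ≤ x ∧ x ≤ ⌈N⌉₊ := by
      intro x y hx hy h
      have h1 : (1:ℤ) ≤ |y| := Int.one_le_abs hy
      have h2 : |x| ≤ |2*x*y| := by
        have he : |2*x*y| = 2 * |x| * |y| := by rw [abs_mul, abs_mul]; simp
        nlinarith [abs_nonneg x]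
      have h3 : ((|2*x*y| : ℤ) : ℝ) ≤ N := by rw [Int.cast_abs]; exact_mod_cast h
      have h4 : ((|x| : ℤ) : ℝ) ≤ (⌈N⌉₊ : ℝ) :=
        le_trans (le_trans (by exact_mod_cast h2) h3) (Nat.le_ceil N)
      have h5 : |x| ≤ (⌈N⌉₊ : ℤ) := by exact_mod_cast h4
      exact abs_le.1 h5
    refine ⟨⟨hb q.1 q.2 h1 h2 h3, ?_⟩, h1, h2, h3⟩
    exact hb q.2 q.1 h2 h1 (by rwa [show 2*q.2*q.1 = 2*q.1*q.2 by ring])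

def emb (n : ℤ) (q : ℤ × ℤ) : ℤ × ℤ × ℤ := (n - q.1, n - q.1 - q.2, n - q.2)

lemma emb_inj (n : ℤ) : Function.Injective (emb n) := by
  intro a b h
  simp only [emb, Prod.ext_iff] at h ⊢
  omega

lemma smallPhase_iff {N : ℝ} (n : ℤ) (p : ℤ × ℤ × ℤ) :
    smallPhase N n p ↔ p ∈ (TT N).image (emb n) := by
  constructor
  · rintro ⟨h1, h2, h3, h4⟩
    refine Finset.mem_image.2 ⟨(n - p.1, n - p.2.2), mem_TT.2 ⟨?_, ?_, ?_⟩, ?_⟩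
    · intro h; apply h3; omega
    · intro h; apply h2; omega
    · simpa [phase] using h4
    · simp only [emb, Prod.ext_iff]; omega
  · intro h
    obtain ⟨q, hq, rfl⟩ := Finset.mem_image.1 h
    obtain ⟨h1, h2, h3⟩ := mem_TT.1 hq
    have hph : phase n (emb n q) = 2 * q.1 * q.2 := by
      simp only [phase, emb]; ring
    refine ⟨?_, ?_, ?_, ?_⟩
    · simp only [emb]; ring
    · simp only [emb, ne_eq]; omega
    · simp only [emb, ne_eq]; omega
    · rw [hph]; exact h3

lemma small_factor {N : ℝ} (hN : 1 ≤ N) {q : ℤ × ℤ} (hq : q ∈ TT N) :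
    |q.1| ≤ (⌈Real.sqrt N⌉₊ : ℤ) ∨ |q.2| ≤ (⌈Real.sqrt N⌉₊ : ℤ) := by
  set R : ℤ := (⌈Real.sqrt N⌉₊ : ℤ) with hR
  by_contra hc
  push_neg at hc
  obtain ⟨hc1, hc2⟩ := hc
  obtain ⟨h1, h2, h3⟩ := mem_TT.1 hq
  have hsR : Real.sqrt N ≤ (R:ℝ) := by exact_mod_cast Nat.le_ceil _
  have hN0 : (0:ℝ) ≤ N := le_trans zero_le_one hN
  have hRN : N ≤ (R:ℝ)^2 := by
    nlinarith [Real.sq_sqrt hN0, Real.sqrt_nonneg N]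
  have habs : |2*q.1*q.2| = 2 * |q.1| * |q.2| := by rw [abs_mul, abs_mul]; simp
  have hR0 : (0:ℤ) ≤ R := by positivity
  have hbig : 2 * (R+1) * (R+1) ≤ |2*q.1*q.2| := by
    rw [habs]; nlinarith
  have : ((|2*q.1*q.2| : ℤ) : ℝ) ≤ N := by rw [Int.cast_abs]; exact_mod_cast h3
  have h2R : ((2*(R+1)*(R+1) : ℤ) : ℝ) ≤ N := le_trans (by exact_mod_cast hbig) this
  push_cast at h2R
  have hR0' : (0:ℝ) ≤ (R:ℝ) := by exact_mod_cast hR0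
  nlinarith [hRN]

lemma fiber_card_gen {N : ℝ} (hN : 1 ≤ N) (e s : ℤ) (he : e = 1 ∨ e = -1) :
    (((TT N).filter fun q => q.1 + e * q.2 = s)).card ≤ 2 * (2 * ⌈Real.sqrt N⌉₊ + 1) := by
  classical
  set R : ℤ := (⌈Real.sqrt N⌉₊ : ℤ) with hR
  have hcard : (((TT N).filter fun q => q.1 + e * q.2 = s)).card ≤
      (Finset.Icc (-R) R ∪ Finset.Icc (s-R) (s+R)).card := by
    apply Finset.card_le_card_of_injOn Prod.fst
    · intro q hq
      simp only [Finset.mem_coe, Finset.mem_filter] at hq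
      obtain ⟨hqT, hqs⟩ := hq
      rcases small_factor hN hqT with h | h
      · simp only [Finset.mem_coe, Finset.mem_union, Finset.mem_Icc]
        obtain ⟨ha, hb⟩ := abs_le.1 h
        left; exact ⟨ha, hb⟩
      · simp only [Finset.mem_coe, Finset.mem_union, Finset.mem_Icc]
        right
        have heq : |e * q.2| = |q.2| := by rcases he with rfl | rfl <;> simp
        have h2 : |e * q.2| ≤ R := by rw [heq]; exact h
        obtain ⟨ha, hb⟩ := abs_le.1 h2
        exact ⟨by omega, by omega⟩
    · intro a ha b hb hab
      simp only [Finset.coe_filter, Set.mem_setOf_eq] at ha hb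
      have h2 : a.2 = b.2 := by
        rcases he with rfl | rfl <;> omega
      exact Prod.ext hab h2
  refine le_trans hcard (le_trans (Finset.card_union_le _ _) ?_)
  rw [Int.card_Icc, Int.card_Icc]
  have hR0 : (0:ℤ) ≤ R := by positivity
  omega

lemma N11_eq (N : ℝ) (v : ℤ → ℂ) (n : ℤ) :
    N11 N v n = ∑ q ∈ TT N, v (n - q.1) * conj (v (n - q.1 - q.2)) * v (n - q.2) := by
  classical
  calc N11 N v n
      = ∑' p : {p : ℤ × ℤ × ℤ // p ∈ (TT N).image (emb n)},
          v p.1.1 * conj (v p.1.2.1) * v p.1.2.2 := by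
        rw [N11]
        exact (Equiv.subtypeEquivRight (fun p => smallPhase_iff n p)).tsum_eq
          (fun p : {p : ℤ × ℤ × ℤ // p ∈ (TT N).image (emb n)} =>
          v p.1.1 * conj (v p.1.2.1) * v p.1.2.2)
    _ = ∑ p ∈ (TT N).image (emb n), v p.1 * conj (v p.2.1) * v p.2.2 :=
        Finset.tsum_subtype ((TT N).image (emb n))
          (fun p : ℤ × ℤ × ℤ => v p.1 * conj (v p.2.1) * v p.2.2)
    _ = ∑ q ∈ TT N, v (n - q.1) * conj (v (n - q.1 - q.2)) * v (n - q.2) :=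
        Finset.sum_image (fun a _ b _ h => emb_inj n h)

lemma sum_comp_le {g : ℤ → ℝ} (hg0 : ∀ s, 0 ≤ g s) (hg : Summable g)
    {s : Finset (ℤ × ℤ)} {σ : ℤ × ℤ → ℤ} {K : ℕ}
    (hK : ∀ c : ℤ, ((s.filter fun q => σ q = c)).card ≤ K) :
    ∑ q ∈ s, g (σ q) ≤ K * ∑' c, g c := by
  classical
  rw [Finset.sum_comp]
  calc ∑ b ∈ s.image σ, ((s.filter fun q => σ q = b)).card • g b
      ≤ ∑ b ∈ s.image σ, (K : ℝ) * g b := by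
        apply Finset.sum_le_sum
        intro b _
        rw [nsmul_eq_mul]
        exact mul_le_mul_of_nonneg_right (by exact_mod_cast hK b) (hg0 b)
    _ = (K : ℝ) * ∑ b ∈ s.image σ, g b := by rw [Finset.mul_sum]
    _ ≤ (K : ℝ) * ∑' c, g c :=
        mul_le_mul_of_nonneg_left (Summable.sum_le_tsum _ (fun i _ => hg0 i) hg) (Nat.cast_nonneg K)

def corrEquiv : (ℤ × ℤ) ≃ (ℤ × ℤ) where
  toFun p := (p.2, p.2 + p.1)
  invFun p := (p.2 - p.1, p.1)
  left_inv p := by simp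
  right_inv p := by simp


set_option maxHeartbeats 1000000 in
/-- **Bound on the small-phase trilinear term `N₁₁`.** For every `ε > 0` there is `C > 0`
such that for all `N ≥ 1` and `v ∈ ℓ²(ℤ;ℂ)`: for each `n` the index set is finite, and
`N₁₁(v) ∈ ℓ²(ℤ;ℂ)` with `‖N₁₁(v)‖ ≤ C N^{1/2+ε} ‖v‖³`. -/
theorem N11_bound : ∀ ε > (0:ℝ), ∃ C > (0:ℝ), ∀ N : ℝ, 1 ≤ N → ∀ v : ℤ → ℂ, Memℓ2 v →
    (∀ n : ℤ, {p : ℤ × ℤ × ℤ | smallPhase N n p}.Finite) ∧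
    Memℓ2 (N11 N v) ∧
    l2norm (N11 N v) ≤ C * N ^ ((1:ℝ)/2 + ε) * l2norm v ^ 3 := by
  intro ε hε
  refine ⟨10, by norm_num, ?_⟩
  intro N hN v hv
  classical
  set a : ℤ → ℝ := fun n => ‖v n‖ ^ 2 with ha
  have ha0 : ∀ n, 0 ≤ a n := fun n => sq_nonneg _
  have hva : Summable a := hv
  set S : ℝ := ∑' n, a n with hSdef
  have hS0 : 0 ≤ S := tsum_nonneg ha0
  set K : ℕ := 2 * (2 * ⌈Real.sqrt N⌉₊ + 1) with hK
  have hshift : ∀ c : ℤ, Summable (fun n => a (n - c)) := fun c =>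
    ((Equiv.subRight c).summable_iff (f := a)).2 hva
  have hshiftL : ∀ c : ℤ, Summable (fun s => a (c - s)) := fun c =>
    ((Equiv.subLeft c).summable_iff (f := a)).2 hva
  have hshiftL' : ∀ c : ℤ, (∑' s, a (c - s)) = S := fun c => (Equiv.subLeft c).tsum_eq a
  have haleS : ∀ j, a j ≤ S := fun j => Summable.le_tsum hva j (fun _ _ => ha0 _)
  set A : ℤ → ℝ := fun n => ∑ q ∈ TT N, a (n - q.1) * a (n - q.2) with hA
  set B : ℤ → ℝ := fun n => ∑ q ∈ TT N, a (n - q.1 - q.2) with hB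
  have hA0 : ∀ n, 0 ≤ A n := fun n => Finset.sum_nonneg fun q _ => mul_nonneg (ha0 _) (ha0 _)
  -- pointwise Cauchy-Schwarz
  have hpt : ∀ n, ‖N11 N v n‖ ^ 2 ≤ A n * B n := by
    intro n
    rw [N11_eq N v n]
    calc ‖∑ q ∈ TT N, v (n - q.1) * conj (v (n - q.1 - q.2)) * v (n - q.2)‖ ^ 2
        ≤ (∑ q ∈ TT N, ‖v (n - q.1) * conj (v (n - q.1 - q.2)) * v (n - q.2)‖) ^ 2 := by
          apply pow_le_pow_left₀ (norm_nonneg _) (norm_sum_le _ _)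
      _ = (∑ q ∈ TT N, (‖v (n - q.1)‖ * ‖v (n - q.2)‖) * ‖v (n - q.1 - q.2)‖) ^ 2 := by
          congr 1
          refine Finset.sum_congr rfl fun q _ => ?_
          rw [norm_mul, norm_mul, RCLike.norm_conj]
          ring
      _ ≤ (∑ q ∈ TT N, (‖v (n - q.1)‖ * ‖v (n - q.2)‖) ^ 2) *
            (∑ q ∈ TT N, ‖v (n - q.1 - q.2)‖ ^ 2) :=
          Finset.sum_mul_sq_le_sq_mul_sq _ _ _
      _ = A n * B n := by
          rw [hA, hB]
          simp only [ha, mul_pow]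
  -- B bound
  have hBle : ∀ n, B n ≤ K * S := by
    intro n
    have h1 := sum_comp_le (g := fun s => a (n - s)) (fun s => ha0 _) (hshiftL n)
      (s := TT N) (σ := fun q => q.1 + 1 * q.2)
      (fun c => fiber_card_gen hN 1 c (Or.inl rfl))
    rw [hshiftL' n] at h1
    refine le_trans (le_of_eq ?_) h1
    rw [hB]
    refine Finset.sum_congr rfl fun q _ => ?_
    congr 1; ring
  -- summability of A
  have hAq : ∀ q : ℤ × ℤ, Summable fun n => a (n - q.1) * a (n - q.2) := by
    intro q
    exact Summable.of_nonneg_of_le (fun n => mul_nonneg (ha0 _) (ha0 _))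
      (fun n => mul_le_mul_of_nonneg_left (haleS _) (ha0 _))
      ((hshift q.1).mul_right S)
  have hAsum : Summable A := by
    rw [hA]
    exact summable_sum fun q _ => hAq q
  -- the correlation function h
  set h : ℤ → ℝ := fun j => ∑' n, a n * a (n + j) with hh
  have hF : Summable (fun p : ℤ × ℤ => a p.1 * a p.2) := hva.mul_of_nonneg hva ha0 ha0
  have hFE : Summable (fun p : ℤ × ℤ => a p.2 * a (p.2 + p.1)) :=
    (corrEquiv.summable_iff (f := fun p : ℤ × ℤ => a p.1 * a p.2)).2 hF
  have hFE0 : ∀ p : ℤ × ℤ, 0 ≤ a p.2 * a (p.2 + p.1) := fun p => mul_nonneg (ha0 _) (ha0 _)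
  have hhsum : Summable h := ((summable_prod_of_nonneg hFE0).1 hFE).2
  have hh0 : ∀ j, 0 ≤ h j := fun j => tsum_nonneg fun n => mul_nonneg (ha0 _) (ha0 _)
  have hhtsum : ∑' j, h j = S * S := by
    calc ∑' j, h j = ∑' p : ℤ × ℤ, a p.2 * a (p.2 + p.1) := by
          rw [Summable.tsum_prod' (f := fun p : ℤ × ℤ => a p.2 * a (p.2 + p.1)) hFE
            (fun b => hFE.prod_factor b)]
      _ = ∑' p : ℤ × ℤ, a p.1 * a p.2 :=
          corrEquiv.tsum_eq (fun p : ℤ × ℤ => a p.1 * a p.2)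
      _ = ∑' n, a n * S := by
          rw [Summable.tsum_prod' (f := fun p : ℤ × ℤ => a p.1 * a p.2) hF (fun b => hva.mul_left (a b))]
          refine tsum_congr fun n => ?_
          show ∑' (c : ℤ), a n * a c = a n * S
          rw [tsum_mul_left, ← hSdef]
      _ = S * S := by rw [tsum_mul_right]
  -- tsum of A
  have htsumA : ∑' n, A n ≤ K * (S * S) := by
    have h1 : ∑' n, A n = ∑ q ∈ TT N, ∑' n, a (n - q.1) * a (n - q.2) := by
      rw [hA]; exact Summable.tsum_finsetSum fun q _ => hAq q
    have h2 : ∀ q : ℤ × ℤ, (∑' n, a (n - q.1) * a (n - q.2)) = h (q.1 - q.2) := by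
      intro q
      calc ∑' n, a (n - q.1) * a (n - q.2)
          = ∑' n, a ((n + q.1) - q.1) * a ((n + q.1) - q.2) :=
            ((Equiv.addRight q.1).tsum_eq (fun n => a (n - q.1) * a (n - q.2))).symm
        _ = ∑' n, a n * a (n + (q.1 - q.2)) := tsum_congr fun n => by
            rw [show n + q.1 - q.1 = n by ring, show n + q.1 - q.2 = n + (q.1 - q.2) by ring]
        _ = h (q.1 - q.2) := by rw [hh]
    rw [h1]
    calc ∑ q ∈ TT N, ∑' n, a (n - q.1) * a (n - q.2)
        = ∑ q ∈ TT N, h (q.1 + (-1) * q.2) := Finset.sum_congr rfl fun q _ => by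
          rw [h2 q]; congr 1; ring
      _ ≤ K * ∑' j, h j := sum_comp_le hh0 hhsum
          (fun c => fiber_card_gen hN (-1) c (Or.inr rfl))
      _ = K * (S * S) := by rw [hhtsum]
  -- assemble
  have hbound : ∀ n, ‖N11 N v n‖ ^ 2 ≤ A n * (K * S) := fun n =>
    le_trans (hpt n) (mul_le_mul_of_nonneg_left (hBle n) (hA0 n))
  have hmem : Memℓ2 (N11 N v) :=
    Summable.of_nonneg_of_le (fun n => sq_nonneg _) hbound (hAsum.mul_right _)
  have hfin : ∀ n : ℤ, {p : ℤ × ℤ × ℤ | smallPhase N n p}.Finite := by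
    intro n
    have hset : {p : ℤ × ℤ × ℤ | smallPhase N n p} = ↑((TT N).image (emb n)) := by
      ext p; simpa using smallPhase_iff n p
    rw [hset]; exact Finset.finite_toSet _
  have htsum : ∑' n, ‖N11 N v n‖ ^ 2 ≤ (K:ℝ)^2 * S^3 := by
    calc ∑' n, ‖N11 N v n‖ ^ 2 ≤ ∑' n, A n * (K * S) :=
          Summable.tsum_le_tsum hbound hmem (hAsum.mul_right _)
      _ = (∑' n, A n) * (K * S) := tsum_mul_right
      _ ≤ (K * (S * S)) * (K * S) :=
          mul_le_mul_of_nonneg_right htsumA (by positivity)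
      _ = (K:ℝ)^2 * S^3 := by ring
  -- numeric bound on K
  have hsq1 : 1 ≤ Real.sqrt N := by
    rw [show (1:ℝ) = Real.sqrt 1 by simp]
    exact Real.sqrt_le_sqrt hN
  have hceil : (⌈Real.sqrt N⌉₊ : ℝ) < Real.sqrt N + 1 :=
    Nat.ceil_lt_add_one (by positivity)
  have hKle : (K : ℝ) ≤ 10 * Real.sqrt N := by
    have hKc : (K:ℝ) = 2 * (2 * (⌈Real.sqrt N⌉₊:ℝ) + 1) := by rw [hK]; push_cast; ring
    rw [hKc]; nlinarith
  have hrpow : Real.sqrt N ≤ N ^ ((1:ℝ)/2 + ε) := by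
    rw [Real.sqrt_eq_rpow]
    exact Real.rpow_le_rpow_of_exponent_le hN (by linarith)
  have hKC : (K:ℝ) ≤ 10 * N ^ ((1:ℝ)/2 + ε) :=
    le_trans hKle (mul_le_mul_of_nonneg_left hrpow (by norm_num))
  refine ⟨hfin, hmem, ?_⟩
  have hsS : Real.sqrt S ^ 2 = S := Real.sq_sqrt hS0
  set C' : ℝ := 10 * N ^ ((1:ℝ)/2 + ε) * Real.sqrt S ^ 3 with hC'
  have hC'0 : 0 ≤ C' := by
    have : (0:ℝ) ≤ N ^ ((1:ℝ)/2 + ε) := Real.rpow_nonneg (by linarith) _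
    positivity
  have hfin2 : (K:ℝ)^2 * S^3 ≤ C' ^ 2 := by
    have h1 : C'^2 = (10 * N ^ ((1:ℝ)/2 + ε))^2 * S^3 := by
      rw [hC', mul_pow, ← pow_mul, pow_mul', hsS]
    rw [h1]
    exact mul_le_mul_of_nonneg_right (pow_le_pow_left₀ (Nat.cast_nonneg K) hKC 2)
      (by positivity)
  have hl2 : l2norm (N11 N v) ≤ C' := by
    rw [l2norm]
    have h3 := Real.sqrt_le_sqrt (le_trans htsum hfin2)
    rwa [Real.sqrt_sq hC'0] at h3
  have hl2v : l2norm v = Real.sqrt S := by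
    rw [l2norm, hSdef]
  calc l2norm (N11 N v) ≤ C' := hl2
    _ = 10 * N ^ ((1:ℝ)/2 + ε) * l2norm v ^ 3 := by rw [hC', hl2v]
end

section
/- For every ε > 0 there exists C > 0 such that for every real N ≥ 1 and every v, w ∈ ℓ²(ℤ; ℂ), with N₁₁(v)(n) := ∑_{(n₁,n₂,n₃): n = n₁ − n₂ + n₃, n₂ ∉ {n₁,n₃}, |2(n−n₁)(n−n₃)| ≤ N} v_{n₁} · conj(v_{n₂}) · v_{n₃} (a finite sum for each n), one has ‖N₁₁(v) − N₁₁(w)‖ ≤ C N^{1/2 + ε} (‖v‖² + ‖w‖²) ‖v − w‖ in ℓ²(ℤ; ℂ). -/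
open scoped BigOperators ComplexConjugate

open scoped ENNReal NNReal

noncomputable section
namespace N11Aux

/-- The set of admissible pairs `(a, c) = (n - n₁, n - n₃)`. -/
def pairSet (N : ℝ) : Finset (ℤ × ℤ) :=
  ((Finset.Icc (-⌈N⌉) ⌈N⌉) ×ˢ (Finset.Icc (-⌈N⌉) ⌈N⌉)).filter
    (fun q => q.1 ≠ 0 ∧ q.2 ≠ 0 ∧ |((2 * q.1 * q.2 : ℤ) : ℝ)| ≤ N)

lemma mem_pairSet {N : ℝ} {q : ℤ × ℤ} :
    q ∈ pairSet N ↔ q.1 ≠ 0 ∧ q.2 ≠ 0 ∧ |((2 * q.1 * q.2 : ℤ) : ℝ)| ≤ N := by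
  constructor
  · intro h
    exact (Finset.mem_filter.mp h).2
  · rintro ⟨h1, h2, h3⟩
    refine Finset.mem_filter.mpr ⟨Finset.mem_product.mpr ⟨?_, ?_⟩, h1, h2, h3⟩
    · have habs : (|q.1| : ℝ) ≤ N := by
        have h4 : |q.1| ≤ |2 * q.1 * q.2| := by
          have : 1 ≤ |q.2| := Int.one_le_abs h2
          calc |q.1| ≤ 2 * |q.1| * |q.2| := by nlinarith [abs_nonneg q.1, abs_nonneg q.2]
            _ = |2 * q.1 * q.2| := by rw [abs_mul, abs_mul]; simp
        calc (|q.1| : ℝ) ≤ |((2 * q.1 * q.2 : ℤ) : ℝ)| := by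
              rw [← Int.cast_abs]; exact_mod_cast Int.cast_le.mpr h4
          _ ≤ N := h3
      have : (|q.1| : ℝ) ≤ (⌈N⌉ : ℝ) := habs.trans (Int.le_ceil N)
      have : |q.1| ≤ ⌈N⌉ := by exact_mod_cast this
      exact Finset.mem_Icc.mpr (abs_le.mp this)
    · have habs : (|q.2| : ℝ) ≤ N := by
        have h4 : |q.2| ≤ |2 * q.1 * q.2| := by
          have : 1 ≤ |q.1| := Int.one_le_abs h1
          calc |q.2| ≤ 2 * |q.1| * |q.2| := by nlinarith [abs_nonneg q.1, abs_nonneg q.2]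
            _ = |2 * q.1 * q.2| := by rw [abs_mul, abs_mul]; simp
        calc (|q.2| : ℝ) ≤ |((2 * q.1 * q.2 : ℤ) : ℝ)| := by
              rw [← Int.cast_abs]; exact_mod_cast Int.cast_le.mpr h4
          _ ≤ N := h3
      have : (|q.2| : ℝ) ≤ (⌈N⌉ : ℝ) := habs.trans (Int.le_ceil N)
      have : |q.2| ≤ ⌈N⌉ := by exact_mod_cast this
      exact Finset.mem_Icc.mpr (abs_le.mp this)


/-- squared ℓ² mass as an extended nonneg real -/
def Q (u : ℤ → ℂ) : ℝ≥0∞ := ∑' n : ℤ, (‖u n‖₊ : ℝ≥0∞) ^ 2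

/-- the generic trilinear expression -/
def Gf (T : Finset (ℤ × ℤ)) (u₁ u₂ u₃ : ℤ → ℂ) (n : ℤ) : ℂ :=
  ∑ q ∈ T, u₁ (n - q.1) * conj (u₂ (n - q.1 - q.2)) * u₃ (n - q.2)

/-- change of variables: the free triple sum factorizes -/
def cov : (ℤ × ℤ) × ℤ ≃ (ℤ × ℤ) × ℤ where
  toFun p := ((p.2 - p.1.2, p.1.1 - p.1.2), p.1.1 + p.2 - p.1.2)
  invFun x := ((x.2 - x.1.1, x.2 - x.1.1 - x.1.2), x.2 - x.1.2)
  left_inv := by rintro ⟨⟨i, k⟩, j⟩; simp only [Prod.mk.injEq]; omega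
  right_inv := by rintro ⟨⟨a, c⟩, n⟩; simp only [Prod.mk.injEq]; omega

lemma triple_sum (f g h : ℤ → ℝ≥0∞) :
    ∑' q : ℤ × ℤ, ∑' n : ℤ, f (n - q.1) * g (n - q.1 - q.2) * h (n - q.2)
      = (∑' i, f i) * (∑' i, g i) * (∑' i, h i) := by
  have h1 : ∑' q : ℤ × ℤ, ∑' n : ℤ, f (n - q.1) * g (n - q.1 - q.2) * h (n - q.2)
      = ∑' x : (ℤ × ℤ) × ℤ, f (x.2 - x.1.1) * g (x.2 - x.1.1 - x.1.2) * h (x.2 - x.1.2) :=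
    (ENNReal.tsum_prod'
      (f := fun x : (ℤ × ℤ) × ℤ => f (x.2 - x.1.1) * g (x.2 - x.1.1 - x.1.2) * h (x.2 - x.1.2))).symm
  rw [h1, ← cov.tsum_eq fun x : (ℤ × ℤ) × ℤ =>
      f (x.2 - x.1.1) * g (x.2 - x.1.1 - x.1.2) * h (x.2 - x.1.2)]
  have h2 : ∀ p : (ℤ × ℤ) × ℤ,
      f ((cov p).2 - (cov p).1.1) * g ((cov p).2 - (cov p).1.1 - (cov p).1.2)
          * h ((cov p).2 - (cov p).1.2)
        = f p.1.1 * g p.1.2 * h p.2 := by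
    rintro ⟨⟨i, k⟩, j⟩
    have a1 : (i + j - k) - (j - k) = i := by ring
    have a2 : (i + j - k) - (j - k) - (i - k) = k := by ring
    have a3 : (i + j - k) - (i - k) = j := by ring
    show f ((i + j - k) - (j - k)) * g ((i + j - k) - (j - k) - (i - k))
        * h ((i + j - k) - (i - k)) = f i * g k * h j
    rw [a2, a1, a3]
  rw [tsum_congr h2, ENNReal.tsum_prod']
  simp_rw [ENNReal.tsum_mul_left, ENNReal.tsum_mul_right]
  rw [ENNReal.tsum_prod']
  simp_rw [ENNReal.tsum_mul_left, ENNReal.tsum_mul_right]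

/-- Cauchy–Schwarz in ℝ≥0 -/
lemma nnreal_sq_sum {ι : Type*} (s : Finset ι) (x : ι → ℝ≥0) :
    (∑ i ∈ s, x i) ^ 2 ≤ (s.card : ℝ≥0) * ∑ i ∈ s, x i ^ 2 := by
  have := sq_sum_le_card_mul_sum_sq (s := s) (f := fun i => (x i : ℝ))
  rw [← NNReal.coe_le_coe]
  push_cast
  exact this

/-- key trilinear estimate -/
lemma key (T : Finset (ℤ × ℤ)) (u₁ u₂ u₃ : ℤ → ℂ) :
    (∑' n : ℤ, (‖Gf T u₁ u₂ u₃ n‖₊ : ℝ≥0∞) ^ 2)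
      ≤ (T.card : ℝ≥0∞) * (Q u₁ * Q u₂ * Q u₃) := by
  have step1 : ∀ n : ℤ, (‖Gf T u₁ u₂ u₃ n‖₊ : ℝ≥0∞) ^ 2
      ≤ (T.card : ℝ≥0∞) * ∑ q ∈ T,
        (‖u₁ (n - q.1)‖₊ : ℝ≥0∞) ^ 2 * (‖u₂ (n - q.1 - q.2)‖₊ : ℝ≥0∞) ^ 2
          * (‖u₃ (n - q.2)‖₊ : ℝ≥0∞) ^ 2 := by
    intro n
    have hn : ‖Gf T u₁ u₂ u₃ n‖₊
        ≤ ∑ q ∈ T, ‖u₁ (n - q.1)‖₊ * ‖u₂ (n - q.1 - q.2)‖₊ * ‖u₃ (n - q.2)‖₊ := by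
      refine (nnnorm_sum_le _ _).trans (le_of_eq (Finset.sum_congr rfl fun q _ => ?_))
      rw [nnnorm_mul, nnnorm_mul, RCLike.nnnorm_conj]
    have hsq : (‖Gf T u₁ u₂ u₃ n‖₊ : ℝ≥0) ^ 2
        ≤ (T.card : ℝ≥0) * ∑ q ∈ T,
          (‖u₁ (n - q.1)‖₊ * ‖u₂ (n - q.1 - q.2)‖₊ * ‖u₃ (n - q.2)‖₊) ^ 2 :=
      le_trans (pow_le_pow_left₀ (zero_le) hn 2) (nnreal_sq_sum _ _)
    calc (‖Gf T u₁ u₂ u₃ n‖₊ : ℝ≥0∞) ^ 2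
        ≤ ((T.card : ℝ≥0) * ∑ q ∈ T,
          (‖u₁ (n - q.1)‖₊ * ‖u₂ (n - q.1 - q.2)‖₊ * ‖u₃ (n - q.2)‖₊) ^ 2 : ℝ≥0) := by
          exact_mod_cast ENNReal.coe_le_coe.mpr hsq
      _ = (T.card : ℝ≥0∞) * ∑ q ∈ T,
          (‖u₁ (n - q.1)‖₊ : ℝ≥0∞) ^ 2 * (‖u₂ (n - q.1 - q.2)‖₊ : ℝ≥0∞) ^ 2
            * (‖u₃ (n - q.2)‖₊ : ℝ≥0∞) ^ 2 := by
          push_cast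
          simp_rw [mul_pow]
  calc (∑' n : ℤ, (‖Gf T u₁ u₂ u₃ n‖₊ : ℝ≥0∞) ^ 2)
      ≤ ∑' n : ℤ, (T.card : ℝ≥0∞) * ∑ q ∈ T,
          (‖u₁ (n - q.1)‖₊ : ℝ≥0∞) ^ 2 * (‖u₂ (n - q.1 - q.2)‖₊ : ℝ≥0∞) ^ 2
            * (‖u₃ (n - q.2)‖₊ : ℝ≥0∞) ^ 2 := ENNReal.tsum_le_tsum step1
    _ = (T.card : ℝ≥0∞) * ∑ q ∈ T, ∑' n : ℤ,
          (‖u₁ (n - q.1)‖₊ : ℝ≥0∞) ^ 2 * (‖u₂ (n - q.1 - q.2)‖₊ : ℝ≥0∞) ^ 2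
            * (‖u₃ (n - q.2)‖₊ : ℝ≥0∞) ^ 2 := by
        rw [ENNReal.tsum_mul_left, Summable.tsum_finsetSum (fun _ _ => ENNReal.summable)]
    _ ≤ (T.card : ℝ≥0∞) * ∑' q : ℤ × ℤ, ∑' n : ℤ,
          (‖u₁ (n - q.1)‖₊ : ℝ≥0∞) ^ 2 * (‖u₂ (n - q.1 - q.2)‖₊ : ℝ≥0∞) ^ 2
            * (‖u₃ (n - q.2)‖₊ : ℝ≥0∞) ^ 2 := by
        gcongr
        exact ENNReal.sum_le_tsum T
    _ = (T.card : ℝ≥0∞) * (Q u₁ * Q u₂ * Q u₃) := by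
        rw [triple_sum (fun i => (‖u₁ i‖₊ : ℝ≥0∞) ^ 2) (fun i => (‖u₂ i‖₊ : ℝ≥0∞) ^ 2)
          (fun i => (‖u₃ i‖₊ : ℝ≥0∞) ^ 2)]
        rfl


lemma Q_eq_coe_tsum (u : ℤ → ℂ) : Q u = ∑' n : ℤ, ((‖u n‖₊ ^ 2 : ℝ≥0) : ℝ≥0∞) := by
  unfold Q; simp [ENNReal.coe_pow]

lemma memℓ2_iff (u : ℤ → ℂ) : Memℓ2 u ↔ Q u ≠ ⊤ := by
  rw [Q_eq_coe_tsum, ENNReal.tsum_coe_ne_top_iff_summable]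
  unfold Memℓ2
  rw [← NNReal.summable_coe]
  apply summable_congr
  intro n
  push_cast
  rfl

lemma tsum_eq_toReal_Q (u : ℤ → ℂ) (hu : Memℓ2 u) : ∑' n : ℤ, ‖u n‖ ^ 2 = (Q u).toReal := by
  have hs : Summable fun n : ℤ => (‖u n‖₊ ^ 2 : ℝ≥0) := by
    rw [← NNReal.summable_coe]
    refine (summable_congr fun n => ?_).mpr hu
    push_cast; rfl
  rw [Q_eq_coe_tsum, ← ENNReal.coe_tsum hs]
  rw [ENNReal.coe_toReal, NNReal.coe_tsum]
  apply tsum_congr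
  intro n
  push_cast
  rfl

lemma toReal_Q (u : ℤ → ℂ) (hu : Memℓ2 u) : (Q u).toReal = l2norm u ^ 2 := by
  rw [l2norm, Real.sq_sqrt (tsum_nonneg fun n => sq_nonneg _), tsum_eq_toReal_Q u hu]

lemma l2norm_eq (u : ℤ → ℂ) (hu : Memℓ2 u) : l2norm u = Real.sqrt (Q u).toReal := by
  rw [l2norm, tsum_eq_toReal_Q u hu]

lemma Q_sub_le (v w : ℤ → ℂ) : Q (fun n => v n - w n) ≤ 2 * (Q v + Q w) := by
  have hpt : ∀ n : ℤ, (‖v n - w n‖₊ : ℝ≥0∞) ^ 2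
      ≤ 2 * ((‖v n‖₊ : ℝ≥0∞) ^ 2 + (‖w n‖₊ : ℝ≥0∞) ^ 2) := by
    intro n
    have h1 : ‖v n - w n‖₊ ≤ ‖v n‖₊ + ‖w n‖₊ := nnnorm_sub_le _ _
    have h2 : (‖v n - w n‖₊ : ℝ≥0) ^ 2 ≤ 2 * ((‖v n‖₊ : ℝ≥0) ^ 2 + (‖w n‖₊ : ℝ≥0) ^ 2) := by
      rw [← NNReal.coe_le_coe]
      push_cast
      have h3 : ‖v n - w n‖ ≤ ‖v n‖ + ‖w n‖ := norm_sub_le _ _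
      nlinarith [norm_nonneg (v n - w n), sq_nonneg (‖v n‖ - ‖w n‖),
        norm_nonneg (v n), norm_nonneg (w n)]
    calc (‖v n - w n‖₊ : ℝ≥0∞) ^ 2 = ((‖v n - w n‖₊ ^ 2 : ℝ≥0) : ℝ≥0∞) := by push_cast; rfl
      _ ≤ ((2 * ((‖v n‖₊ : ℝ≥0) ^ 2 + (‖w n‖₊ : ℝ≥0) ^ 2) : ℝ≥0) : ℝ≥0∞) :=
          ENNReal.coe_le_coe.mpr h2
      _ = 2 * ((‖v n‖₊ : ℝ≥0∞) ^ 2 + (‖w n‖₊ : ℝ≥0∞) ^ 2) := by push_cast; rfl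
  calc Q (fun n => v n - w n) ≤ ∑' n : ℤ, 2 * ((‖v n‖₊ : ℝ≥0∞) ^ 2 + (‖w n‖₊ : ℝ≥0∞) ^ 2) :=
        ENNReal.tsum_le_tsum hpt
    _ = 2 * (Q v + Q w) := by rw [ENNReal.tsum_mul_left, ENNReal.tsum_add]; rfl

lemma Q_add3_le (g1 g2 g3 : ℤ → ℂ) :
    Q (fun n => g1 n + g2 n + g3 n) ≤ 3 * (Q g1 + Q g2 + Q g3) := by
  have hpt : ∀ n : ℤ, (‖g1 n + g2 n + g3 n‖₊ : ℝ≥0∞) ^ 2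
      ≤ 3 * ((‖g1 n‖₊ : ℝ≥0∞) ^ 2 + (‖g2 n‖₊ : ℝ≥0∞) ^ 2 + (‖g3 n‖₊ : ℝ≥0∞) ^ 2) := by
    intro n
    have h1 : ‖g1 n + g2 n + g3 n‖₊ ≤ ‖g1 n‖₊ + ‖g2 n‖₊ + ‖g3 n‖₊ :=
      le_trans (nnnorm_add_le _ _) (add_le_add_left (nnnorm_add_le _ _) _)
    have h2 : (‖g1 n + g2 n + g3 n‖₊ : ℝ≥0) ^ 2
        ≤ 3 * ((‖g1 n‖₊ : ℝ≥0) ^ 2 + (‖g2 n‖₊ : ℝ≥0) ^ 2 + (‖g3 n‖₊ : ℝ≥0) ^ 2) := by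
      rw [← NNReal.coe_le_coe]
      push_cast
      have h3 : ‖g1 n + g2 n + g3 n‖ ≤ ‖g1 n‖ + ‖g2 n‖ + ‖g3 n‖ :=
        le_trans (norm_add_le _ _) (add_le_add_left (norm_add_le _ _) _)
      nlinarith [norm_nonneg (g1 n + g2 n + g3 n), sq_nonneg (‖g1 n‖ - ‖g2 n‖),
        sq_nonneg (‖g1 n‖ - ‖g3 n‖), sq_nonneg (‖g2 n‖ - ‖g3 n‖),
        norm_nonneg (g1 n), norm_nonneg (g2 n), norm_nonneg (g3 n)]
    calc (‖g1 n + g2 n + g3 n‖₊ : ℝ≥0∞) ^ 2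
        = ((‖g1 n + g2 n + g3 n‖₊ ^ 2 : ℝ≥0) : ℝ≥0∞) := by push_cast; rfl
      _ ≤ ((3 * ((‖g1 n‖₊ : ℝ≥0) ^ 2 + (‖g2 n‖₊ : ℝ≥0) ^ 2 + (‖g3 n‖₊ : ℝ≥0) ^ 2) : ℝ≥0) : ℝ≥0∞) :=
          ENNReal.coe_le_coe.mpr h2
      _ = 3 * ((‖g1 n‖₊ : ℝ≥0∞) ^ 2 + (‖g2 n‖₊ : ℝ≥0∞) ^ 2 + (‖g3 n‖₊ : ℝ≥0∞) ^ 2) := by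
          push_cast; rfl
  calc Q (fun n => g1 n + g2 n + g3 n)
      ≤ ∑' n : ℤ, 3 * ((‖g1 n‖₊ : ℝ≥0∞) ^ 2 + (‖g2 n‖₊ : ℝ≥0∞) ^ 2 + (‖g3 n‖₊ : ℝ≥0∞) ^ 2) :=
        ENNReal.tsum_le_tsum hpt
    _ = 3 * (Q g1 + Q g2 + Q g3) := by
        rw [ENNReal.tsum_mul_left, ENNReal.tsum_add, ENNReal.tsum_add]; rfl


/-- reindexing equivalence for fixed `n` -/
def reindex (N : ℝ) (n : ℤ) :
    {q : ℤ × ℤ // q ∈ pairSet N} ≃ {p : ℤ × ℤ × ℤ // smallPhase N n p} where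
  toFun q := ⟨(n - q.1.1, n - q.1.1 - q.1.2, n - q.1.2), by
    obtain ⟨h1, h2, h3⟩ := mem_pairSet.mp q.2
    refine ⟨by ring, by simpa using h2, by simpa using h1, ?_⟩
    have : phase n (n - q.1.1, n - q.1.1 - q.1.2, n - q.1.2) = 2 * q.1.1 * q.1.2 := by
      unfold phase; ring
    rw [this]; exact h3⟩
  invFun p := ⟨(n - p.1.1, n - p.1.2.2), by
    obtain ⟨h1, h2, h3, h4⟩ := p.2
    refine mem_pairSet.mpr ⟨by omega, by omega, ?_⟩
    have : 2 * (n - p.1.1) * (n - p.1.2.2) = phase n p.1 := rfl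
    rw [this]; exact h4⟩
  left_inv := by rintro ⟨⟨a, c⟩, h⟩; apply Subtype.ext; simp only [Prod.mk.injEq]; omega
  right_inv := by
    rintro ⟨⟨n₁, n₂, n₃⟩, h1, h2, h3, h4⟩
    dsimp only at h1 h2 h3
    apply Subtype.ext; simp only [Prod.mk.injEq]; omega

lemma N11_eq (N : ℝ) (v : ℤ → ℂ) (n : ℤ) :
    N11 N v n = ∑ q ∈ pairSet N, v (n - q.1) * conj (v (n - q.1 - q.2)) * v (n - q.2) := by
  rw [N11, ← (reindex N n).tsum_eq fun p : {p : ℤ × ℤ × ℤ // smallPhase N n p} =>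
    v p.1.1 * conj (v p.1.2.1) * v p.1.2.2]
  rw [show (fun q : {q : ℤ × ℤ // q ∈ pairSet N} =>
      v ((reindex N n) q).1.1 * conj (v ((reindex N n) q).1.2.1) * v ((reindex N n) q).1.2.2)
    = fun q : {q : ℤ × ℤ // q ∈ pairSet N} =>
      v (n - q.1.1) * conj (v (n - q.1.1 - q.1.2)) * v (n - q.1.2) from rfl]
  exact Finset.tsum_subtype (pairSet N) fun q => v (n - q.1) * conj (v (n - q.1 - q.2)) * v (n - q.2)


lemma card_pairSet_le {N : ℝ} (hN : 1 ≤ N) :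
    ((pairSet N).card : ℝ) ≤ 4 * N + 2 * N * Real.log N := by
  classical
  set M : ℤ := ⌈N⌉ with hMdef
  have hM1 : 1 ≤ M := by
    rw [hMdef]; exact_mod_cast Int.le_ceil_iff.mpr (by norm_num; linarith)
  set A0 : Finset ℤ := (Finset.Icc (-M) M).erase 0 with hA0
  -- fiberwise count
  have hfib : (pairSet N).card = ∑ a ∈ A0, ((pairSet N).filter (fun q => q.1 = a)).card := by
    apply Finset.card_eq_sum_card_fiberwise
    intro q hq
    obtain ⟨h1, -, -⟩ := mem_pairSet.mp hq
    have := (Finset.mem_product.mp (Finset.mem_filter.mp hq).1).1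
    exact Finset.mem_erase.mpr ⟨h1, this⟩
  -- each fiber has at most N/|a| elements
  have hfibbd : ∀ a ∈ A0, (((pairSet N).filter (fun q => q.1 = a)).card : ℝ) ≤ N / (|a| : ℝ) := by
    intro a ha
    have ha0 : a ≠ 0 := (Finset.mem_erase.mp ha).1
    have haabs : (1 : ℝ) ≤ (|a| : ℝ) := by exact_mod_cast Int.one_le_abs ha0
    set K : ℤ := ⌊N / (2 * (|a| : ℝ))⌋ with hK
    have hK0 : 0 ≤ K := Int.le_floor.mpr (by push_cast; positivity)
    have hsub : ((pairSet N).filter (fun q => q.1 = a)).card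
        ≤ ((Finset.Icc (-K) K).erase 0).card := by
      apply Finset.card_le_card_of_injOn Prod.snd
      · intro q hq
        obtain ⟨hq1, hq2⟩ := Finset.mem_filter.mp hq
        obtain ⟨-, hc0, habs⟩ := mem_pairSet.mp hq1
        refine Finset.mem_erase.mpr ⟨hc0, Finset.mem_Icc.mpr (abs_le.mp ?_)⟩
        rw [hK]
        apply Int.le_floor.mpr
        rw [Int.cast_abs]
        have h2 : |((2 * q.1 * q.2 : ℤ) : ℝ)| = 2 * (|a| : ℝ) * |(q.2 : ℝ)| := by
          push_cast
          rw [abs_mul, abs_mul, hq2]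
          norm_num
        rw [h2] at habs
        rw [le_div_iff₀ (by positivity)]
        linarith [habs]
      · intro q1 h1 q2 h2 heq
        have e1 := (Finset.mem_filter.mp h1).2
        have e2 := (Finset.mem_filter.mp h2).2
        exact Prod.ext (e1.trans e2.symm) heq
    have hcard : (((Finset.Icc (-K) K).erase 0).card : ℝ) = 2 * (K : ℝ) := by
      have h4 : ((K.toNat : ℝ)) = (K : ℝ) := by
        rw [← Int.cast_natCast, Int.toNat_of_nonneg hK0]
      rw [Finset.card_erase_of_mem (Finset.mem_Icc.mpr ⟨by omega, hK0⟩), Int.card_Icc]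
      have h5 : (K + 1 - -K).toNat = 2 * K.toNat + 1 := by omega
      rw [h5]
      push_cast
      rw [h4]
    have hKle : (K : ℝ) ≤ N / (2 * (|a| : ℝ)) := Int.floor_le _
    calc (((pairSet N).filter (fun q => q.1 = a)).card : ℝ)
        ≤ (((Finset.Icc (-K) K).erase 0).card : ℝ) := by exact_mod_cast hsub
      _ = 2 * (K : ℝ) := hcard
      _ ≤ 2 * (N / (2 * (|a| : ℝ))) := by linarith
      _ = N / (|a| : ℝ) := by field_simp
  -- sum over A0
  have hsplit : A0 = Finset.Icc (-M) (-1) ∪ Finset.Icc 1 M := by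
    ext x
    simp only [hA0, Finset.mem_erase, Finset.mem_Icc, Finset.mem_union]
    omega
  have hdisj : Disjoint (Finset.Icc (-M) (-1)) (Finset.Icc (1:ℤ) M) := by
    rw [Finset.disjoint_left]
    intro x hx hx'
    simp only [Finset.mem_Icc] at hx hx'
    omega
  have hneg : ∑ a ∈ Finset.Icc (-M) (-1), N / (|a| : ℝ)
      = ∑ k ∈ Finset.Icc (1:ℤ) M, N / (|k| : ℝ) := by
    refine Finset.sum_nbij' (i := fun a : ℤ => -a) (j := fun k : ℤ => -k) ?_ ?_ ?_ ?_ ?_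
    · intro a ha; simp only [Finset.mem_Icc] at ha ⊢; omega
    · intro k hk; simp only [Finset.mem_Icc] at hk ⊢; omega
    · intro a _; ring
    · intro k _; ring
    · intro a _
      have h9 : |((-a : ℤ) : ℝ)| = |(a : ℝ)| := by push_cast; rw [abs_neg]
      show N / |(a:ℝ)| = N / |((-a : ℤ) : ℝ)|
      rw [h9]
  have habs_pos : ∀ k ∈ Finset.Icc (1:ℤ) M, N / (|k| : ℝ) = N * ((k:ℝ))⁻¹ := by
    intro k hk
    have hkpos : (0:ℤ) < k := by have := (Finset.mem_Icc.mp hk).1; omega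
    rw [abs_of_pos (show (0:ℝ) < (k:ℝ) by exact_mod_cast hkpos), div_eq_mul_inv]
  -- identify with harmonic number
  have hIcc : ∑ k ∈ Finset.Icc (1:ℤ) M, ((k:ℝ))⁻¹ = ∑ j ∈ Finset.Icc 1 M.toNat, ((j:ℝ))⁻¹ := by
    refine Finset.sum_nbij' (i := fun k : ℤ => k.toNat) (j := fun j : ℕ => (j : ℤ))
      ?_ ?_ ?_ ?_ ?_
    · intro k hk; simp only [Finset.mem_Icc] at hk ⊢; omega
    · intro j hj; simp only [Finset.mem_Icc] at hj ⊢; omega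
    · intro k hk
      simp only [Finset.mem_Icc] at hk
      show ((k.toNat : ℤ)) = k
      omega
    · intro j _
      show ((j : ℤ)).toNat = j
      omega
    · intro k hk
      simp only [Finset.mem_Icc] at hk
      show ((k:ℝ))⁻¹ = ((k.toNat : ℕ) : ℝ)⁻¹
      have h9 : ((k.toNat : ℕ) : ℝ) = (k : ℝ) := by
        exact_mod_cast Int.toNat_of_nonneg (by omega : (0:ℤ) ≤ k)
      rw [h9]
  have hharm : ∑ j ∈ Finset.Icc 1 M.toNat, ((j:ℝ))⁻¹ ≤ 1 + Real.log M.toNat := by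
    have h1 := harmonic_le_one_add_log M.toNat
    rw [harmonic_eq_sum_Icc] at h1
    push_cast at h1
    exact h1
  have hlogM : Real.log M.toNat ≤ 1 + Real.log N := by
    have hMN : ((M.toNat : ℝ)) ≤ 2 * N := by
      have h1 : (M : ℝ) < N + 1 := Int.ceil_lt_add_one N
      have h2 : ((M.toNat : ℝ)) = (M : ℝ) := by
        rw [← Int.cast_natCast, Int.toNat_of_nonneg (by omega)]
      rw [h2]; linarith
    have hMt : (0:ℝ) < (M.toNat : ℝ) := by
      have : 0 < M.toNat := by omega
      exact_mod_cast this
    calc Real.log M.toNat ≤ Real.log (2 * N) :=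
          Real.log_le_log hMt hMN
      _ = Real.log 2 + Real.log N := Real.log_mul (by norm_num) (by linarith)
      _ ≤ 1 + Real.log N := by
          have := Real.log_le_sub_one_of_pos (show (0:ℝ) < 2 by norm_num)
          linarith
  -- put it together
  have hlogN0 : 0 ≤ Real.log N := Real.log_nonneg hN
  calc ((pairSet N).card : ℝ)
      = ∑ a ∈ A0, (((pairSet N).filter (fun q => q.1 = a)).card : ℝ) := by
        rw [hfib]; push_cast; ring
    _ ≤ ∑ a ∈ A0, N / (|a| : ℝ) := Finset.sum_le_sum hfibbd
    _ = 2 * ∑ k ∈ Finset.Icc (1:ℤ) M, N / (|k| : ℝ) := by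
        rw [hsplit, Finset.sum_union hdisj, hneg]; ring
    _ = 2 * N * ∑ k ∈ Finset.Icc (1:ℤ) M, ((k:ℝ))⁻¹ := by
        rw [Finset.sum_congr rfl habs_pos, ← Finset.mul_sum]; ring
    _ ≤ 2 * N * (1 + (1 + Real.log N)) := by
        have hsum : ∑ k ∈ Finset.Icc (1:ℤ) M, ((k:ℝ))⁻¹ ≤ 1 + (1 + Real.log N) := by
          rw [hIcc]
          exact hharm.trans (by linarith)
        have h2N : (0:ℝ) ≤ 2 * N := by linarith
        nlinarith [hsum]
    _ = 4 * N + 2 * N * Real.log N := by ring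

lemma card_pairSet_le_rpow {N δ : ℝ} (hN : 1 ≤ N) (hδ : 0 < δ) :
    ((pairSet N).card : ℝ) ≤ (4 + 2 / δ) * N ^ ((1:ℝ) + δ) := by
  have hN0 : (0:ℝ) < N := by linarith
  have hlog : Real.log N ≤ N ^ δ / δ := by
    have h1 : δ * Real.log N = Real.log (N ^ δ) := (Real.log_rpow hN0 δ).symm
    have h2 : Real.log (N ^ δ) ≤ N ^ δ - 1 := Real.log_le_sub_one_of_pos (by positivity)
    rw [le_div_iff₀ hδ]
    nlinarith
  have hNle : N ≤ N ^ ((1:ℝ) + δ) := by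
    calc N = N ^ (1:ℝ) := (Real.rpow_one N).symm
      _ ≤ N ^ ((1:ℝ) + δ) := Real.rpow_le_rpow_of_exponent_le hN (by linarith)
  have hmul : N * N ^ δ = N ^ ((1:ℝ) + δ) := by
    rw [Real.rpow_add hN0, Real.rpow_one]
  have hpow0 : (0:ℝ) ≤ N ^ δ := by positivity
  calc ((pairSet N).card : ℝ) ≤ 4 * N + 2 * N * Real.log N := card_pairSet_le hN
    _ ≤ 4 * N ^ ((1:ℝ) + δ) + 2 * N * (N ^ δ / δ) := by
        have hlog2 : 2 * N * Real.log N ≤ 2 * N * (N ^ δ / δ) := by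
          apply mul_le_mul_of_nonneg_left hlog (by linarith)
        linarith
    _ = 4 * N ^ ((1:ℝ) + δ) + (2 / δ) * (N * N ^ δ) := by field_simp
    _ = (4 + 2 / δ) * N ^ ((1:ℝ) + δ) := by rw [hmul]; ring

lemma diff_split (N : ℝ) (v w : ℤ → ℂ) (n : ℤ) :
    N11 N v n - N11 N w n
      = Gf (pairSet N) (fun m => v m - w m) v v n
        + Gf (pairSet N) w (fun m => v m - w m) v n
        + Gf (pairSet N) w w (fun m => v m - w m) n := by
  rw [N11_eq N v n, N11_eq N w n]
  unfold Gf
  rw [← Finset.sum_sub_distrib, ← Finset.sum_add_distrib, ← Finset.sum_add_distrib]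
  apply Finset.sum_congr rfl
  intro q _
  simp only [map_sub]
  ring

end N11Aux
end


open N11Aux

/-- **Lipschitz bound for the small-phase trilinear term `N₁₁`.** For every `ε > 0` there is
`C > 0` such that for all `N ≥ 1` and `v, w ∈ ℓ²(ℤ;ℂ)`:
`‖N₁₁(v) − N₁₁(w)‖ ≤ C N^{1/2+ε} (‖v‖² + ‖w‖²) ‖v − w‖` in `ℓ²(ℤ;ℂ)`. -/
theorem N11_diff_bound : ∀ ε > (0:ℝ), ∃ C > (0:ℝ), ∀ N : ℝ, 1 ≤ N →
    ∀ v w : ℤ → ℂ, Memℓ2 v → Memℓ2 w →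
    Memℓ2 (fun n => N11 N v n - N11 N w n) ∧
    l2norm (fun n => N11 N v n - N11 N w n)
      ≤ C * N ^ ((1:ℝ)/2 + ε) * (l2norm v ^ 2 + l2norm w ^ 2) *
        l2norm (fun n => v n - w n) := by
  intro ε hε
  refine ⟨Real.sqrt 3 * Real.sqrt (4 + 2 / (2 * ε)), by positivity, ?_⟩
  intro N hN v w hv hw
  have hN0 : (0:ℝ) < N := by linarith
  set S : Finset (ℤ × ℤ) := pairSet N with hS
  set d : ℤ → ℂ := fun n => v n - w n with hd
  -- ENNReal masses
  have hQv : Q v ≠ ⊤ := (memℓ2_iff v).mp hv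
  have hQw : Q w ≠ ⊤ := (memℓ2_iff w).mp hw
  have hQd : Q d ≠ ⊤ := by
    refine ne_top_of_le_ne_top ?_ (Q_sub_le v w)
    exact ENNReal.mul_ne_top (by norm_num) (ENNReal.add_ne_top.mpr ⟨hQv, hQw⟩)
  have hvd : Memℓ2 d := (memℓ2_iff d).mpr hQd
  -- splitting
  have hsplitfun : (fun n => N11 N v n - N11 N w n)
      = fun n => Gf S d v v n + Gf S w d v n + Gf S w w d n := by
    funext n
    exact diff_split N v w n
  -- key bounds
  have k1 : Q (Gf S d v v) ≤ (S.card : ℝ≥0∞) * (Q d * Q v * Q v) := key S d v v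
  have k2 : Q (Gf S w d v) ≤ (S.card : ℝ≥0∞) * (Q w * Q d * Q v) := key S w d v
  have k3 : Q (Gf S w w d) ≤ (S.card : ℝ≥0∞) * (Q w * Q w * Q d) := key S w w d
  set R : ℝ≥0∞ := 3 * ((S.card : ℝ≥0∞) * (Q d * Q v * Q v)
      + (S.card : ℝ≥0∞) * (Q w * Q d * Q v) + (S.card : ℝ≥0∞) * (Q w * Q w * Q d)) with hR
  have hQD : Q (fun n => N11 N v n - N11 N w n) ≤ R := by
    rw [hsplitfun]
    refine le_trans (Q_add3_le _ _ _) ?_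
    rw [hR]
    gcongr
  have hcardne : ((S.card : ℝ≥0∞)) ≠ ⊤ := ENNReal.natCast_ne_top _
  have hfin1 : (S.card : ℝ≥0∞) * (Q d * Q v * Q v) ≠ ⊤ :=
    ENNReal.mul_ne_top hcardne (ENNReal.mul_ne_top (ENNReal.mul_ne_top hQd hQv) hQv)
  have hfin2 : (S.card : ℝ≥0∞) * (Q w * Q d * Q v) ≠ ⊤ :=
    ENNReal.mul_ne_top hcardne (ENNReal.mul_ne_top (ENNReal.mul_ne_top hQw hQd) hQv)
  have hfin3 : (S.card : ℝ≥0∞) * (Q w * Q w * Q d) ≠ ⊤ :=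
    ENNReal.mul_ne_top hcardne (ENNReal.mul_ne_top (ENNReal.mul_ne_top hQw hQw) hQd)
  have hRne : R ≠ ⊤ := by
    rw [hR]
    exact ENNReal.mul_ne_top (by norm_num)
      (ENNReal.add_ne_top.mpr ⟨ENNReal.add_ne_top.mpr ⟨hfin1, hfin2⟩, hfin3⟩)
  have hmemD : Memℓ2 (fun n => N11 N v n - N11 N w n) :=
    (memℓ2_iff _).mpr (ne_top_of_le_ne_top hRne hQD)
  refine ⟨hmemD, ?_⟩
  -- real quantities
  set x : ℝ := l2norm v with hx
  set y : ℝ := l2norm w with hy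
  set z : ℝ := l2norm d with hz
  have hx0 : 0 ≤ x := Real.sqrt_nonneg _
  have hy0 : 0 ≤ y := Real.sqrt_nonneg _
  have hz0 : 0 ≤ z := Real.sqrt_nonneg _
  have hqv : (Q v).toReal = x ^ 2 := toReal_Q v hv
  have hqw : (Q w).toReal = y ^ 2 := toReal_Q w hw
  have hqd : (Q d).toReal = z ^ 2 := toReal_Q d hvd
  have hcard0 : (0:ℝ) ≤ (S.card : ℝ) := Nat.cast_nonneg _
  -- toReal of R
  have hRreal : R.toReal = 3 * ((S.card : ℝ) * (z ^ 2 * x ^ 2 * x ^ 2)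
      + (S.card : ℝ) * (y ^ 2 * z ^ 2 * x ^ 2) + (S.card : ℝ) * (y ^ 2 * y ^ 2 * z ^ 2)) := by
    rw [hR, ENNReal.toReal_mul, ENNReal.toReal_add (ENNReal.add_ne_top.mpr ⟨hfin1, hfin2⟩) hfin3,
      ENNReal.toReal_add hfin1 hfin2, ENNReal.toReal_mul, ENNReal.toReal_mul, ENNReal.toReal_mul,
      ENNReal.toReal_mul, ENNReal.toReal_mul, ENNReal.toReal_mul, ENNReal.toReal_mul,
      ENNReal.toReal_mul, ENNReal.toReal_mul, hqv, hqw, hqd]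
    simp [ENNReal.toReal_ofNat]
  -- the l2 norm bound
  have hDle : l2norm (fun n => N11 N v n - N11 N w n)
      ≤ Real.sqrt 3 * Real.sqrt (S.card : ℝ) * ((x ^ 2 + y ^ 2) * z) := by
    rw [l2norm_eq _ hmemD]
    have h1 : (Q (fun n => N11 N v n - N11 N w n)).toReal ≤ R.toReal :=
      ENNReal.toReal_mono hRne hQD
    have h2 : R.toReal ≤ (Real.sqrt 3 * Real.sqrt (S.card : ℝ) * ((x ^ 2 + y ^ 2) * z)) ^ 2 := by
      rw [hRreal]
      have e3 : (Real.sqrt 3) ^ 2 = 3 := Real.sq_sqrt (by norm_num)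
      have ec : (Real.sqrt (S.card : ℝ)) ^ 2 = (S.card : ℝ) := Real.sq_sqrt hcard0
      have expand : (Real.sqrt 3 * Real.sqrt (S.card : ℝ) * ((x ^ 2 + y ^ 2) * z)) ^ 2
          = 3 * ((S.card : ℝ) * ((x ^ 2 + y ^ 2) ^ 2 * z ^ 2)) := by
        rw [mul_pow, mul_pow, mul_pow, e3, ec]
        ring
      rw [expand]
      nlinarith [mul_nonneg (mul_nonneg hcard0 (sq_nonneg z)) (sq_nonneg (x * y))]
    calc Real.sqrt (Q (fun n => N11 N v n - N11 N w n)).toReal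
        ≤ Real.sqrt ((Real.sqrt 3 * Real.sqrt (S.card : ℝ) * ((x ^ 2 + y ^ 2) * z)) ^ 2) :=
          Real.sqrt_le_sqrt (h1.trans h2)
      _ = Real.sqrt 3 * Real.sqrt (S.card : ℝ) * ((x ^ 2 + y ^ 2) * z) := by
          rw [Real.sqrt_sq (by positivity)]
  -- estimate sqrt of card
  have hcard : ((S.card : ℝ)) ≤ (4 + 2 / (2 * ε)) * N ^ ((1:ℝ) + 2 * ε) :=
    card_pairSet_le_rpow hN (by linarith)
  have hsqrtcard : Real.sqrt (S.card : ℝ)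
      ≤ Real.sqrt (4 + 2 / (2 * ε)) * N ^ ((1:ℝ)/2 + ε) := by
    have h4 : (0:ℝ) ≤ 4 + 2 / (2 * ε) := by positivity
    have h5 : Real.sqrt ((4 + 2 / (2 * ε)) * N ^ ((1:ℝ) + 2 * ε))
        = Real.sqrt (4 + 2 / (2 * ε)) * Real.sqrt (N ^ ((1:ℝ) + 2 * ε)) :=
      Real.sqrt_mul h4 _
    have h6 : Real.sqrt (N ^ ((1:ℝ) + 2 * ε)) = N ^ ((1:ℝ)/2 + ε) := by
      rw [Real.sqrt_eq_rpow, ← Real.rpow_mul (le_of_lt hN0)]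
      congr 1
      ring
    calc Real.sqrt (S.card : ℝ) ≤ Real.sqrt ((4 + 2 / (2 * ε)) * N ^ ((1:ℝ) + 2 * ε)) :=
          Real.sqrt_le_sqrt hcard
      _ = Real.sqrt (4 + 2 / (2 * ε)) * N ^ ((1:ℝ)/2 + ε) := by rw [h5, h6]
  -- final chain
  have hfinal : Real.sqrt 3 * Real.sqrt (S.card : ℝ) * ((x ^ 2 + y ^ 2) * z)
      ≤ Real.sqrt 3 * Real.sqrt (4 + 2 / (2 * ε)) * N ^ ((1:ℝ)/2 + ε) * (x ^ 2 + y ^ 2) * z := by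
    have hxyz : (0:ℝ) ≤ (x ^ 2 + y ^ 2) * z := by positivity
    calc Real.sqrt 3 * Real.sqrt (S.card : ℝ) * ((x ^ 2 + y ^ 2) * z)
        ≤ Real.sqrt 3 * (Real.sqrt (4 + 2 / (2 * ε)) * N ^ ((1:ℝ)/2 + ε)) * ((x ^ 2 + y ^ 2) * z) := by
          have := mul_le_mul_of_nonneg_left hsqrtcard (Real.sqrt_nonneg 3)
          exact mul_le_mul_of_nonneg_right this hxyz
      _ = Real.sqrt 3 * Real.sqrt (4 + 2 / (2 * ε)) * N ^ ((1:ℝ)/2 + ε) * (x ^ 2 + y ^ 2) * z := by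
          ring
  exact hDle.trans hfinal
end

section
/- For every ε > 0 there exists C > 0 such that for every real N ≥ 1, every t ∈ ℝ, and every v ∈ ℓ²(ℤ; ℂ): for each n ∈ ℤ the series N₂₁(v)(n) := ∑_{(n₁,n₂,n₃): n = n₁ − n₂ + n₃, n₂ ∉ {n₁,n₃}, |Φ| > N} (e^{−iΦt}/Φ) · v_{n₁} · conj(v_{n₂}) · v_{n₃}, where Φ = 2(n − n₁)(n − n₃), converges absolutely, and the resulting function n ↦ N₂₁(v)(n) belongs to ℓ²(ℤ; ℂ) with ‖N₂₁(v)‖ ≤ C N^{−1/2 + ε} ‖v‖³. -/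
open scoped BigOperators ComplexConjugate

/-- The large-phase non-resonant condition: `n = n₁ − n₂ + n₃`, `n₂ ∉ {n₁, n₃}`, `|Φ| > N`. -/
def largePhase (N : ℝ) (n : ℤ) (p : ℤ × ℤ × ℤ) : Prop :=
  n = p.1 - p.2.1 + p.2.2 ∧ p.2.1 ≠ p.1 ∧ p.2.1 ≠ p.2.2 ∧ N < |((phase n p : ℤ) : ℝ)|

/-- The summand `(e^{−iΦt}/Φ) v_{n₁} conj(v_{n₂}) v_{n₃}` of the boundary term `N₂₁`. -/
noncomputable def term21 (t : ℝ) (v : ℤ → ℂ) (n : ℤ) (p : ℤ × ℤ × ℤ) : ℂ :=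
  Complex.exp (-Complex.I * ((phase n p : ℤ) : ℂ) * (t : ℂ)) / ((phase n p : ℤ) : ℂ) *
    v p.1 * conj (v p.2.1) * v p.2.2

/-- The boundary term `N₂₁(v)(n)` from the first normal form reduction. -/
noncomputable def N21 (N t : ℝ) (v : ℤ → ℂ) (n : ℤ) : ℂ :=
  ∑' p : {p : ℤ × ℤ × ℤ // largePhase N n p}, term21 t v n p.1

/-- Cauchy–Schwarz for tsums of nonnegative reals. -/
lemma tsum_cs {ι : Type*} (f g : ι → ℝ) (hf : ∀ i, 0 ≤ f i) (hg : ∀ i, 0 ≤ g i)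
    (hf2 : Summable fun i => f i ^ 2) (hg2 : Summable fun i => g i ^ 2) :
    Summable (fun i => f i * g i) ∧
    (∑' i, f i * g i) ≤ Real.sqrt (∑' i, f i ^ 2) * Real.sqrt (∑' i, g i ^ 2) := by
  have hs : Summable fun i => f i * g i := by
    refine Summable.of_nonneg_of_le (fun i => mul_nonneg (hf i) (hg i)) (fun i => ?_)
      ((hf2.add hg2).mul_left (1/2 : ℝ))
    nlinarith [sq_nonneg (f i - g i)]
  refine ⟨hs, Summable.tsum_le_of_sum_le hs fun s => ?_⟩
  calc ∑ i ∈ s, f i * g i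
      ≤ Real.sqrt (∑ i ∈ s, f i ^ 2) * Real.sqrt (∑ i ∈ s, g i ^ 2) := by
        rw [← Real.sqrt_mul (Finset.sum_nonneg fun i _ => sq_nonneg _)]
        exact Real.le_sqrt_of_sq_le (Finset.sum_mul_sq_le_sq_mul_sq s f g)
    _ ≤ Real.sqrt (∑' i, f i ^ 2) * Real.sqrt (∑' i, g i ^ 2) := by
        gcongr <;> exact Summable.sum_le_tsum _ (fun i _ => sq_nonneg _) (by assumption)

/-- The nonresonant large-phase condition in the `(a,b) = (n - n₁, n - n₃)` variables. -/
def Qcond (N : ℝ) (q : ℤ × ℤ) : Prop :=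
  q.1 ≠ 0 ∧ q.2 ≠ 0 ∧ N < |((2 * q.1 * q.2 : ℤ) : ℝ)|

/-- Reparametrization of the large-phase triples by `(a, b) = (n - n₁, n - n₃)`. -/
def phaseEquiv (N : ℝ) (n : ℤ) :
    {q : ℤ × ℤ // Qcond N q} ≃ {p : ℤ × ℤ × ℤ // largePhase N n p} where
  toFun q := ⟨(n - q.1.1, n - q.1.1 - q.1.2, n - q.1.2), by
    obtain ⟨q, ha, hb, h⟩ := q
    refine ⟨show n = (n - q.1) - (n - q.1 - q.2) + (n - q.2) by ring, ?_, ?_, ?_⟩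
    · show n - q.1 - q.2 ≠ n - q.1; omega
    · show n - q.1 - q.2 ≠ n - q.2; omega
    · show N < |((phase n (n - q.1, n - q.1 - q.2, n - q.2) : ℤ) : ℝ)|
      have hp : phase n (n - q.1, n - q.1 - q.2, n - q.2) = 2 * q.1 * q.2 := by
        simp only [phase]; ring
      rw [hp]; exact h⟩
  invFun p := ⟨(n - p.1.1, n - p.1.2.2), by
    obtain ⟨h1, h2, h3, h4⟩ := p.2
    exact ⟨fun h => h3 (by omega), fun h => h2 (by omega), h4⟩⟩
  left_inv q := by
    obtain ⟨q, hq⟩ := q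
    apply Subtype.ext
    show (n - (n - q.1), n - (n - q.2)) = q
    rw [Prod.ext_iff]
    constructor <;> [show n - (n - q.1) = q.1; show n - (n - q.2) = q.2] <;> omega
  right_inv p := by
    obtain ⟨p, h1, h2, h3, h4⟩ := p
    apply Subtype.ext
    show (n - (n - p.1), n - (n - p.1) - (n - p.2.2), n - (n - p.2.2)) = p
    rw [Prod.ext_iff, Prod.ext_iff]
    refine ⟨show n - (n - p.1) = p.1 by omega,
      show n - (n - p.1) - (n - p.2.2) = p.2.1 by omega,
      show n - (n - p.2.2) = p.2.2 by omega⟩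

lemma phaseEquiv_coe (N : ℝ) (n : ℤ) (q : {q : ℤ × ℤ // Qcond N q}) :
    ((phaseEquiv N n q : ℤ × ℤ × ℤ)) = (n - q.1.1, n - q.1.1 - q.1.2, n - q.1.2) := rfl

lemma phase_phaseEquiv (N : ℝ) (n : ℤ) (q : {q : ℤ × ℤ // Qcond N q}) :
    phase n (phaseEquiv N n q : ℤ × ℤ × ℤ) = 2 * q.1.1 * q.1.2 := by
  simp only [phaseEquiv_coe, phase]; ring

/-- Norm of the summand. -/
lemma norm_term21 (t : ℝ) (v : ℤ → ℂ) (n : ℤ) (p : ℤ × ℤ × ℤ) :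
    ‖term21 t v n p‖ =
      (|((phase n p : ℤ) : ℝ)|)⁻¹ * (‖v p.1‖ * ‖v p.2.1‖ * ‖v p.2.2‖) := by
  have hexp : ‖Complex.exp (-Complex.I * ((phase n p : ℤ) : ℂ) * (t : ℂ))‖ = 1 := by
    have : (-Complex.I * ((phase n p : ℤ) : ℂ) * (t : ℂ))
        = (((-(phase n p : ℝ) * t : ℝ)) : ℂ) * Complex.I := by
      push_cast; ring
    rw [this, Complex.norm_exp_ofReal_mul_I]
  have hΦ : ‖(((phase n p : ℤ)) : ℂ)‖ = |((phase n p : ℤ) : ℝ)| := by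
    rw [show (((phase n p : ℤ)) : ℂ) = (((phase n p : ℤ) : ℝ) : ℂ) by push_cast; ring,
      Complex.norm_real, Real.norm_eq_abs]
  simp only [term21, norm_mul, norm_div, hexp, hΦ, RCLike.norm_conj]
  ring

/-- The change of variables `(n, a, b) ↦ (n - a, n - a - b, n - b)` on `ℤ³`. -/
def cov : ℤ × ℤ × ℤ ≃ ℤ × ℤ × ℤ where
  toFun x := (x.1 - x.2.1, x.1 - x.2.1 - x.2.2, x.1 - x.2.2)
  invFun m := (m.1 - m.2.1 + m.2.2, m.2.2 - m.2.1, m.1 - m.2.1)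
  left_inv x := by
    rw [Prod.ext_iff, Prod.ext_iff]
    refine ⟨show (x.1 - x.2.1) - (x.1 - x.2.1 - x.2.2) + (x.1 - x.2.2) = x.1 by ring,
      show (x.1 - x.2.2) - (x.1 - x.2.1 - x.2.2) = x.2.1 by ring,
      show (x.1 - x.2.1) - (x.1 - x.2.1 - x.2.2) = x.2.2 by ring⟩
  right_inv m := by
    rw [Prod.ext_iff, Prod.ext_iff]
    refine ⟨show (m.1 - m.2.1 + m.2.2) - (m.2.2 - m.2.1) = m.1 by ring,
      show (m.1 - m.2.1 + m.2.2) - (m.2.2 - m.2.1) - (m.1 - m.2.1) = m.2.1 by ring,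
      show (m.1 - m.2.1 + m.2.2) - (m.1 - m.2.1) = m.2.2 by ring⟩

set_option maxHeartbeats 2000000 in
/-- **Bound on the boundary term `N₂₁`.** For every `ε > 0` there is `C > 0` such that for
every `N ≥ 1`, every `t ∈ ℝ`, and every `v ∈ ℓ²(ℤ;ℂ)`: the series defining `N₂₁(v)(n)`
converges absolutely for each `n`, and `N₂₁(v) ∈ ℓ²(ℤ;ℂ)` with
`‖N₂₁(v)‖ ≤ C N^{−1/2+ε} ‖v‖³`. -/
theorem N21_bound : ∀ ε > (0:ℝ), ∃ C > (0:ℝ), ∀ N : ℝ, 1 ≤ N → ∀ t : ℝ,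
    ∀ v : ℤ → ℂ, Memℓ2 v →
    (∀ n : ℤ, Summable fun p : {p : ℤ × ℤ × ℤ // largePhase N n p} => ‖term21 t v n p.1‖) ∧
    Memℓ2 (N21 N t v) ∧
    l2norm (N21 N t v) ≤ C * N ^ (-(1:ℝ)/2 + ε) * l2norm v ^ 3 := by
  intro ε hε
  have hδ0 : 0 < min ε (1/4 : ℝ) := lt_min hε (by norm_num)
  have hδε : min ε (1/4 : ℝ) ≤ ε := min_le_left _ _
  have hδq : min ε (1/4 : ℝ) ≤ 1/4 := min_le_right _ _
  set δ := min ε (1/4 : ℝ) with hδdef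
  have hK : Summable (fun a : ℤ => |(a : ℝ)| ^ (-(1 + 2*δ))) :=
    Real.summable_abs_int_rpow (by linarith)
  have hK0 : 0 ≤ ∑' a : ℤ, |(a : ℝ)| ^ (-(1 + 2*δ)) :=
    tsum_nonneg fun a => Real.rpow_nonneg (abs_nonneg _) _
  set K := ∑' a : ℤ, |(a : ℝ)| ^ (-(1 + 2*δ)) with hKdef
  refine ⟨K + 1, by positivity, fun N hN t v hv => ?_⟩
  have hN0 : (0:ℝ) < N := lt_of_lt_of_le one_pos hN
  -- basic facts about v
  have hT0 : 0 ≤ ∑' m : ℤ, ‖v m‖ ^ 2 := tsum_nonneg fun _ => sq_nonneg _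
  have hvT : ∀ m : ℤ, ‖v m‖ ^ 2 ≤ ∑' m : ℤ, ‖v m‖ ^ 2 :=
    fun m => Summable.le_tsum hv m fun _ _ => sq_nonneg _
  have hshift : ∀ k : ℤ, Summable (fun a : ℤ => ‖v (k - a)‖ ^ 2) :=
    fun k => hv.comp_injective sub_right_injective
  -- summability of F n ^ 2 over ℤ × ℤ
  have hF2 : ∀ n : ℤ, Summable (fun q : ℤ × ℤ =>
      (‖v (n - q.1)‖ * ‖v (n - q.1 - q.2)‖ * ‖v (n - q.2)‖) ^ 2) := by
    intro n
    refine Summable.of_nonneg_of_le (fun q => sq_nonneg _) (fun q => ?_)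
      (((hshift n).mul_of_nonneg (hshift n) (fun a => sq_nonneg _)
        (fun b => sq_nonneg _)).mul_left (∑' m : ℤ, ‖v m‖ ^ 2))
    have h1 : (‖v (n - q.1)‖ * ‖v (n - q.1 - q.2)‖ * ‖v (n - q.2)‖) ^ 2
        = ‖v (n - q.1)‖ ^ 2 * ‖v (n - q.1 - q.2)‖ ^ 2 * ‖v (n - q.2)‖ ^ 2 := by ring
    rw [h1]
    calc ‖v (n - q.1)‖ ^ 2 * ‖v (n - q.1 - q.2)‖ ^ 2 * ‖v (n - q.2)‖ ^ 2
        ≤ ‖v (n - q.1)‖ ^ 2 * (∑' m : ℤ, ‖v m‖ ^ 2) * ‖v (n - q.2)‖ ^ 2 := by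
          gcongr
          exact hvT _
      _ = (∑' m : ℤ, ‖v m‖ ^ 2) * (‖v (n - q.1)‖ ^ 2 * ‖v (n - q.2)‖ ^ 2) := by ring
  -- ENNReal bookkeeping for the triple sum
  have hWT : ∑' m : ℤ, ENNReal.ofReal (‖v m‖ ^ 2) = ENNReal.ofReal (∑' m : ℤ, ‖v m‖ ^ 2) :=
    (ENNReal.ofReal_tsum_of_nonneg (fun _ => sq_nonneg _) hv).symm
  have hHof : ∀ n : ℤ, ENNReal.ofReal (∑' q : ℤ × ℤ,
        (‖v (n - q.1)‖ * ‖v (n - q.1 - q.2)‖ * ‖v (n - q.2)‖) ^ 2)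
      = ∑' q : ℤ × ℤ, (ENNReal.ofReal (‖v (n - q.1)‖ ^ 2) *
          ENNReal.ofReal (‖v (n - q.1 - q.2)‖ ^ 2) * ENNReal.ofReal (‖v (n - q.2)‖ ^ 2)) := by
    intro n
    rw [ENNReal.ofReal_tsum_of_nonneg (fun q => sq_nonneg _) (hF2 n)]
    refine tsum_congr fun q => ?_
    rw [show (‖v (n - q.1)‖ * ‖v (n - q.1 - q.2)‖ * ‖v (n - q.2)‖) ^ 2
        = ‖v (n - q.1)‖ ^ 2 * ‖v (n - q.1 - q.2)‖ ^ 2 * ‖v (n - q.2)‖ ^ 2 by ring,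
      ENNReal.ofReal_mul (by positivity), ENNReal.ofReal_mul (by positivity)]
  have h3sum : ∑' n : ℤ, ENNReal.ofReal (∑' q : ℤ × ℤ,
        (‖v (n - q.1)‖ * ‖v (n - q.1 - q.2)‖ * ‖v (n - q.2)‖) ^ 2)
      = (ENNReal.ofReal (∑' m : ℤ, ‖v m‖ ^ 2)) ^ 3 := by
    calc ∑' n : ℤ, ENNReal.ofReal (∑' q : ℤ × ℤ,
          (‖v (n - q.1)‖ * ‖v (n - q.1 - q.2)‖ * ‖v (n - q.2)‖) ^ 2)
        = ∑' n : ℤ, ∑' q : ℤ × ℤ, (ENNReal.ofReal (‖v (n - q.1)‖ ^ 2) *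
            ENNReal.ofReal (‖v (n - q.1 - q.2)‖ ^ 2) * ENNReal.ofReal (‖v (n - q.2)‖ ^ 2)) :=
          tsum_congr hHof
      _ = ∑' x : ℤ × ℤ × ℤ, (ENNReal.ofReal (‖v (x.1 - x.2.1)‖ ^ 2) *
            ENNReal.ofReal (‖v (x.1 - x.2.1 - x.2.2)‖ ^ 2) *
            ENNReal.ofReal (‖v (x.1 - x.2.2)‖ ^ 2)) := by rw [ENNReal.tsum_prod']
      _ = ∑' m : ℤ × ℤ × ℤ, (ENNReal.ofReal (‖v m.1‖ ^ 2) *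
            ENNReal.ofReal (‖v m.2.1‖ ^ 2) * ENNReal.ofReal (‖v m.2.2‖ ^ 2)) :=
          cov.tsum_eq (fun m => ENNReal.ofReal (‖v m.1‖ ^ 2) *
            ENNReal.ofReal (‖v m.2.1‖ ^ 2) * ENNReal.ofReal (‖v m.2.2‖ ^ 2))
      _ = ∑' m1 : ℤ, ∑' p : ℤ × ℤ, (ENNReal.ofReal (‖v m1‖ ^ 2) *
            ENNReal.ofReal (‖v p.1‖ ^ 2) * ENNReal.ofReal (‖v p.2‖ ^ 2)) := by rw [ENNReal.tsum_prod']
      _ = ∑' m1 : ℤ, ENNReal.ofReal (‖v m1‖ ^ 2) * ∑' p : ℤ × ℤ,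
            (ENNReal.ofReal (‖v p.1‖ ^ 2) * ENNReal.ofReal (‖v p.2‖ ^ 2)) := by
          refine tsum_congr fun m1 => ?_
          rw [← ENNReal.tsum_mul_left]
          exact tsum_congr fun p => by rw [mul_assoc]
      _ = (∑' m : ℤ, ENNReal.ofReal (‖v m‖ ^ 2)) * ∑' p : ℤ × ℤ,
            (ENNReal.ofReal (‖v p.1‖ ^ 2) * ENNReal.ofReal (‖v p.2‖ ^ 2)) :=
          ENNReal.tsum_mul_right
      _ = (∑' m : ℤ, ENNReal.ofReal (‖v m‖ ^ 2)) * ((∑' m : ℤ, ENNReal.ofReal (‖v m‖ ^ 2)) *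
            (∑' m : ℤ, ENNReal.ofReal (‖v m‖ ^ 2))) := by
          congr 1
          calc ∑' p : ℤ × ℤ, (ENNReal.ofReal (‖v p.1‖ ^ 2) * ENNReal.ofReal (‖v p.2‖ ^ 2))
              = ∑' a : ℤ, ∑' b : ℤ, (ENNReal.ofReal (‖v a‖ ^ 2) * ENNReal.ofReal (‖v b‖ ^ 2)) := by
                rw [ENNReal.tsum_prod']
            _ = ∑' a : ℤ, ENNReal.ofReal (‖v a‖ ^ 2) * ∑' b : ℤ, ENNReal.ofReal (‖v b‖ ^ 2) :=
                tsum_congr fun a => ENNReal.tsum_mul_left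
            _ = _ := ENNReal.tsum_mul_right
      _ = (∑' m : ℤ, ENNReal.ofReal (‖v m‖ ^ 2)) ^ 3 := by ring_nf
      _ = (ENNReal.ofReal (∑' m : ℤ, ‖v m‖ ^ 2)) ^ 3 := by rw [hWT]
  have hH0 : ∀ n : ℤ, 0 ≤ ∑' q : ℤ × ℤ,
      (‖v (n - q.1)‖ * ‖v (n - q.1 - q.2)‖ * ‖v (n - q.2)‖) ^ 2 :=
    fun n => tsum_nonneg fun q => sq_nonneg _
  have hEne : ∑' n : ℤ, ENNReal.ofReal (∑' q : ℤ × ℤ,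
      (‖v (n - q.1)‖ * ‖v (n - q.1 - q.2)‖ * ‖v (n - q.2)‖) ^ 2) ≠ ⊤ := by
    rw [h3sum]; exact ENNReal.pow_ne_top ENNReal.ofReal_ne_top
  have hHsum : Summable (fun n : ℤ => ∑' q : ℤ × ℤ,
      (‖v (n - q.1)‖ * ‖v (n - q.1 - q.2)‖ * ‖v (n - q.2)‖) ^ 2) := by
    have h := ENNReal.summable_toReal hEne
    exact h.congr fun n => ENNReal.toReal_ofReal (hH0 n)
  have hHval : ∑' n : ℤ, (∑' q : ℤ × ℤ,
        (‖v (n - q.1)‖ * ‖v (n - q.1 - q.2)‖ * ‖v (n - q.2)‖) ^ 2)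
      = (∑' m : ℤ, ‖v m‖ ^ 2) ^ 3 := by
    have h : ENNReal.ofReal (∑' n : ℤ, (∑' q : ℤ × ℤ,
          (‖v (n - q.1)‖ * ‖v (n - q.1 - q.2)‖ * ‖v (n - q.2)‖) ^ 2))
        = ENNReal.ofReal ((∑' m : ℤ, ‖v m‖ ^ 2) ^ 3) := by
      rw [ENNReal.ofReal_tsum_of_nonneg hH0 hHsum, h3sum, ← ENNReal.ofReal_pow hT0]
    rwa [ENNReal.ofReal_eq_ofReal_iff (tsum_nonneg hH0) (by positivity)] at h
  -- the weight bound
  have hrpow0 : ∀ z : ℤ, 0 ≤ |(z : ℝ)| ^ (-(1 + 2*δ)) :=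
    fun z => Real.rpow_nonneg (abs_nonneg _) _
  have hbnd0 : ∀ q : ℤ × ℤ, 0 ≤ N ^ (-(1:ℝ) + 2*δ) *
      (|(q.1 : ℝ)| ^ (-(1 + 2*δ)) * |(q.2 : ℝ)| ^ (-(1 + 2*δ))) := fun q => by positivity
  have hprodsum : Summable (fun q : ℤ × ℤ =>
      |(q.1 : ℝ)| ^ (-(1 + 2*δ)) * |(q.2 : ℝ)| ^ (-(1 + 2*δ))) :=
    hK.mul_of_nonneg hK (fun a => hrpow0 a) (fun b => hrpow0 b)
  have hbndsum : Summable (fun q : ℤ × ℤ => N ^ (-(1:ℝ) + 2*δ) *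
      (|(q.1 : ℝ)| ^ (-(1 + 2*δ)) * |(q.2 : ℝ)| ^ (-(1 + 2*δ)))) := hprodsum.mul_left _
  have hkey : ∀ q : ℤ × ℤ, Qcond N q →
      ((|((2 * q.1 * q.2 : ℤ) : ℝ)|)⁻¹) ^ 2 ≤ N ^ (-(1:ℝ) + 2*δ) *
        (|(q.1 : ℝ)| ^ (-(1 + 2*δ)) * |(q.2 : ℝ)| ^ (-(1 + 2*δ))) := by
    rintro q ⟨ha, hb, hq⟩
    have hx1 : (1:ℝ) ≤ |(q.1 : ℝ)| := by
      have h := Int.one_le_abs (by exact_mod_cast ha : q.1 ≠ 0)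
      calc (1:ℝ) ≤ ((|q.1| : ℤ) : ℝ) := by exact_mod_cast h
        _ = |(q.1 : ℝ)| := by push_cast; ring
    have hy1 : (1:ℝ) ≤ |(q.2 : ℝ)| := by
      have h := Int.one_le_abs (by exact_mod_cast hb : q.2 ≠ 0)
      calc (1:ℝ) ≤ ((|q.2| : ℤ) : ℝ) := by exact_mod_cast h
        _ = |(q.2 : ℝ)| := by push_cast; ring
    have hx0 : (0:ℝ) < |(q.1 : ℝ)| := lt_of_lt_of_le one_pos hx1
    have hy0 : (0:ℝ) < |(q.2 : ℝ)| := lt_of_lt_of_le one_pos hy1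
    have habs : |((2 * q.1 * q.2 : ℤ) : ℝ)| = 2 * |(q.1 : ℝ)| * |(q.2 : ℝ)| := by
      push_cast
      rw [abs_mul, abs_mul, abs_two]
    have hNxy : N < 2 * |(q.1 : ℝ)| * |(q.2 : ℝ)| := by rw [← habs]; exact hq
    have h2xy : (0:ℝ) < 2 * |(q.1 : ℝ)| * |(q.2 : ℝ)| := by positivity
    have hc2 : ((|((2 * q.1 * q.2 : ℤ) : ℝ)|)⁻¹) ^ 2
        = (2 * |(q.1 : ℝ)| * |(q.2 : ℝ)|) ^ (-(2:ℝ)) := by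
      rw [habs, inv_pow, ← Real.rpow_two, ← Real.rpow_neg h2xy.le]
    have hsplit : (2 * |(q.1 : ℝ)| * |(q.2 : ℝ)|) ^ (-(2:ℝ))
        = (2 * |(q.1 : ℝ)| * |(q.2 : ℝ)|) ^ (-(1 - 2*δ)) *
          (2 * |(q.1 : ℝ)| * |(q.2 : ℝ)|) ^ (-(1 + 2*δ)) := by
      rw [← Real.rpow_add h2xy]
      congr 1
      ring
    have h1 : (2 * |(q.1 : ℝ)| * |(q.2 : ℝ)|) ^ (-(1 - 2*δ)) ≤ N ^ (-(1 - 2*δ)) :=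
      Real.rpow_le_rpow_of_nonpos hN0 hNxy.le (by linarith)
    have h2 : (2 * |(q.1 : ℝ)| * |(q.2 : ℝ)|) ^ (-(1 + 2*δ))
        ≤ (|(q.1 : ℝ)| * |(q.2 : ℝ)|) ^ (-(1 + 2*δ)) :=
      Real.rpow_le_rpow_of_nonpos (mul_pos hx0 hy0) (by have := mul_pos hx0 hy0; linarith) (by linarith)
    have h3 : (|(q.1 : ℝ)| * |(q.2 : ℝ)|) ^ (-(1 + 2*δ))
        = |(q.1 : ℝ)| ^ (-(1 + 2*δ)) * |(q.2 : ℝ)| ^ (-(1 + 2*δ)) :=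
      Real.mul_rpow (abs_nonneg _) (abs_nonneg _)
    have h4 : N ^ (-(1 - 2*δ)) = N ^ (-(1:ℝ) + 2*δ) := by congr 1; ring
    calc ((|((2 * q.1 * q.2 : ℤ) : ℝ)|)⁻¹) ^ 2
        = (2 * |(q.1 : ℝ)| * |(q.2 : ℝ)|) ^ (-(1 - 2*δ)) *
          (2 * |(q.1 : ℝ)| * |(q.2 : ℝ)|) ^ (-(1 + 2*δ)) := by rw [hc2, hsplit]
      _ ≤ N ^ (-(1 - 2*δ)) * (|(q.1 : ℝ)| * |(q.2 : ℝ)|) ^ (-(1 + 2*δ)) :=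
          mul_le_mul h1 h2 (Real.rpow_nonneg h2xy.le _) (Real.rpow_nonneg hN0.le _)
      _ = N ^ (-(1:ℝ) + 2*δ) * (|(q.1 : ℝ)| ^ (-(1 + 2*δ)) * |(q.2 : ℝ)| ^ (-(1 + 2*δ))) := by
          rw [h4, h3]
  -- summability of the weights on the large-phase set
  have hcQ : Summable (fun q : {q : ℤ × ℤ // Qcond N q} =>
      ((|((2 * q.1.1 * q.1.2 : ℤ) : ℝ)|)⁻¹) ^ 2) :=
    Summable.of_nonneg_of_le (fun q => sq_nonneg _) (fun q => hkey q.1 q.2)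
      (hbndsum.subtype _)
  have hS0 : 0 ≤ ∑' q : {q : ℤ × ℤ // Qcond N q}, ((|((2 * q.1.1 * q.1.2 : ℤ) : ℝ)|)⁻¹) ^ 2 :=
    tsum_nonneg fun q => sq_nonneg _
  have hSle : (∑' q : {q : ℤ × ℤ // Qcond N q}, ((|((2 * q.1.1 * q.1.2 : ℤ) : ℝ)|)⁻¹) ^ 2)
      ≤ N ^ (-(1:ℝ) + 2*δ) * (K * K) := by
    calc (∑' q : {q : ℤ × ℤ // Qcond N q}, ((|((2 * q.1.1 * q.1.2 : ℤ) : ℝ)|)⁻¹) ^ 2)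
        ≤ ∑' q : {q : ℤ × ℤ // Qcond N q}, N ^ (-(1:ℝ) + 2*δ) *
            (|(q.1.1 : ℝ)| ^ (-(1 + 2*δ)) * |(q.1.2 : ℝ)| ^ (-(1 + 2*δ))) :=
          Summable.tsum_le_tsum (fun q => hkey q.1 q.2) hcQ (hbndsum.subtype _)
      _ ≤ ∑' q : ℤ × ℤ, N ^ (-(1:ℝ) + 2*δ) *
            (|(q.1 : ℝ)| ^ (-(1 + 2*δ)) * |(q.2 : ℝ)| ^ (-(1 + 2*δ))) :=
          Summable.tsum_subtype_le _ _ hbnd0 hbndsum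
      _ = N ^ (-(1:ℝ) + 2*δ) * (K * K) := by
          rw [tsum_mul_left]
          congr 1
          exact (Summable.tsum_mul_tsum hK hK hprodsum).symm
  -- Cauchy–Schwarz at each fixed n
  have hFQ : ∀ n : ℤ, Summable (fun q : {q : ℤ × ℤ // Qcond N q} =>
      (‖v (n - q.1.1)‖ * ‖v (n - q.1.1 - q.1.2)‖ * ‖v (n - q.1.2)‖) ^ 2) :=
    fun n => ((hF2 n).subtype _)
  have hCS : ∀ n : ℤ,
      Summable (fun q : {q : ℤ × ℤ // Qcond N q} =>
        (|((2 * q.1.1 * q.1.2 : ℤ) : ℝ)|)⁻¹ *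
          (‖v (n - q.1.1)‖ * ‖v (n - q.1.1 - q.1.2)‖ * ‖v (n - q.1.2)‖)) ∧
      (∑' q : {q : ℤ × ℤ // Qcond N q}, (|((2 * q.1.1 * q.1.2 : ℤ) : ℝ)|)⁻¹ *
          (‖v (n - q.1.1)‖ * ‖v (n - q.1.1 - q.1.2)‖ * ‖v (n - q.1.2)‖))
        ≤ Real.sqrt (∑' q : {q : ℤ × ℤ // Qcond N q},
            ((|((2 * q.1.1 * q.1.2 : ℤ) : ℝ)|)⁻¹) ^ 2) *
          Real.sqrt (∑' q : {q : ℤ × ℤ // Qcond N q},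
            (‖v (n - q.1.1)‖ * ‖v (n - q.1.1 - q.1.2)‖ * ‖v (n - q.1.2)‖) ^ 2) :=
    fun n => tsum_cs _ _ (fun q => inv_nonneg.2 (abs_nonneg _)) (fun q => by positivity)
      hcQ (hFQ n)
  -- norm of the summand after reparametrization
  have hnorm : ∀ (n : ℤ) (q : {q : ℤ × ℤ // Qcond N q}),
      ‖term21 t v n ((phaseEquiv N n) q : ℤ × ℤ × ℤ)‖ =
        (|((2 * q.1.1 * q.1.2 : ℤ) : ℝ)|)⁻¹ *
          (‖v (n - q.1.1)‖ * ‖v (n - q.1.1 - q.1.2)‖ * ‖v (n - q.1.2)‖) := by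
    intro n q
    rw [norm_term21, phase_phaseEquiv, phaseEquiv_coe]
  -- absolute convergence
  have hsummable : ∀ n : ℤ,
      Summable fun p : {p : ℤ × ℤ × ℤ // largePhase N n p} => ‖term21 t v n p.1‖ := by
    intro n
    rw [← (phaseEquiv N n).summable_iff]
    exact ((hCS n).1).congr fun q => (hnorm n q).symm
  -- pointwise bound on N21
  have hpt : ∀ n : ℤ, ‖N21 N t v n‖ ≤
      Real.sqrt (∑' q : {q : ℤ × ℤ // Qcond N q}, ((|((2 * q.1.1 * q.1.2 : ℤ) : ℝ)|)⁻¹) ^ 2) *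
      Real.sqrt (∑' q : ℤ × ℤ, (‖v (n - q.1)‖ * ‖v (n - q.1 - q.2)‖ * ‖v (n - q.2)‖) ^ 2) := by
    intro n
    have h1 : ‖N21 N t v n‖ ≤ ∑' p : {p : ℤ × ℤ × ℤ // largePhase N n p}, ‖term21 t v n p.1‖ :=
      norm_tsum_le_tsum_norm (hsummable n)
    have h2 : (∑' p : {p : ℤ × ℤ × ℤ // largePhase N n p}, ‖term21 t v n p.1‖)
        = ∑' q : {q : ℤ × ℤ // Qcond N q}, (|((2 * q.1.1 * q.1.2 : ℤ) : ℝ)|)⁻¹ *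
            (‖v (n - q.1.1)‖ * ‖v (n - q.1.1 - q.1.2)‖ * ‖v (n - q.1.2)‖) := by
      rw [← (phaseEquiv N n).tsum_eq (fun p : {p : ℤ × ℤ × ℤ // largePhase N n p} =>
        ‖term21 t v n p.1‖)]
      exact tsum_congr fun q => hnorm n q
    have h3 : Real.sqrt (∑' q : {q : ℤ × ℤ // Qcond N q},
          (‖v (n - q.1.1)‖ * ‖v (n - q.1.1 - q.1.2)‖ * ‖v (n - q.1.2)‖) ^ 2)
        ≤ Real.sqrt (∑' q : ℤ × ℤ,
          (‖v (n - q.1)‖ * ‖v (n - q.1 - q.2)‖ * ‖v (n - q.2)‖) ^ 2) :=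
      Real.sqrt_le_sqrt (Summable.tsum_subtype_le _ _ (fun q => sq_nonneg _) (hF2 n))
    calc ‖N21 N t v n‖ ≤ ∑' p : {p : ℤ × ℤ × ℤ // largePhase N n p}, ‖term21 t v n p.1‖ := h1
      _ = ∑' q : {q : ℤ × ℤ // Qcond N q}, (|((2 * q.1.1 * q.1.2 : ℤ) : ℝ)|)⁻¹ *
            (‖v (n - q.1.1)‖ * ‖v (n - q.1.1 - q.1.2)‖ * ‖v (n - q.1.2)‖) := h2
      _ ≤ Real.sqrt (∑' q : {q : ℤ × ℤ // Qcond N q},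
            ((|((2 * q.1.1 * q.1.2 : ℤ) : ℝ)|)⁻¹) ^ 2) *
          Real.sqrt (∑' q : {q : ℤ × ℤ // Qcond N q},
            (‖v (n - q.1.1)‖ * ‖v (n - q.1.1 - q.1.2)‖ * ‖v (n - q.1.2)‖) ^ 2) := (hCS n).2
      _ ≤ _ := mul_le_mul_of_nonneg_left h3 (Real.sqrt_nonneg _)
  -- squared pointwise bound
  have hsq : ∀ n : ℤ, ‖N21 N t v n‖ ^ 2 ≤
      (∑' q : {q : ℤ × ℤ // Qcond N q}, ((|((2 * q.1.1 * q.1.2 : ℤ) : ℝ)|)⁻¹) ^ 2) *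
      (∑' q : ℤ × ℤ, (‖v (n - q.1)‖ * ‖v (n - q.1 - q.2)‖ * ‖v (n - q.2)‖) ^ 2) := by
    intro n
    have h := pow_le_pow_left₀ (norm_nonneg _) (hpt n) 2
    rwa [mul_pow, Real.sq_sqrt hS0, Real.sq_sqrt (hH0 n)] at h
  have hmem : Memℓ2 (N21 N t v) :=
    Summable.of_nonneg_of_le (fun n => sq_nonneg _) hsq (hHsum.mul_left _)
  refine ⟨hsummable, hmem, ?_⟩
  -- the ℓ² bound
  have hsum2 : (∑' n : ℤ, ‖N21 N t v n‖ ^ 2) ≤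
      (∑' q : {q : ℤ × ℤ // Qcond N q}, ((|((2 * q.1.1 * q.1.2 : ℤ) : ℝ)|)⁻¹) ^ 2) *
      ((∑' m : ℤ, ‖v m‖ ^ 2) ^ 3) := by
    calc (∑' n : ℤ, ‖N21 N t v n‖ ^ 2)
        ≤ ∑' n : ℤ, (∑' q : {q : ℤ × ℤ // Qcond N q},
            ((|((2 * q.1.1 * q.1.2 : ℤ) : ℝ)|)⁻¹) ^ 2) *
            (∑' q : ℤ × ℤ, (‖v (n - q.1)‖ * ‖v (n - q.1 - q.2)‖ * ‖v (n - q.2)‖) ^ 2) :=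
          Summable.tsum_le_tsum hsq hmem (hHsum.mul_left _)
      _ = (∑' q : {q : ℤ × ℤ // Qcond N q}, ((|((2 * q.1.1 * q.1.2 : ℤ) : ℝ)|)⁻¹) ^ 2) *
          ∑' n : ℤ, (∑' q : ℤ × ℤ,
            (‖v (n - q.1)‖ * ‖v (n - q.1 - q.2)‖ * ‖v (n - q.2)‖) ^ 2) := tsum_mul_left
      _ = _ := by rw [hHval]
  have hfin1 : l2norm (N21 N t v) ≤
      Real.sqrt ((∑' q : {q : ℤ × ℤ // Qcond N q}, ((|((2 * q.1.1 * q.1.2 : ℤ) : ℝ)|)⁻¹) ^ 2) *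
        ((∑' m : ℤ, ‖v m‖ ^ 2) ^ 3)) := Real.sqrt_le_sqrt hsum2
  have hsplit2 : Real.sqrt ((∑' q : {q : ℤ × ℤ // Qcond N q},
        ((|((2 * q.1.1 * q.1.2 : ℤ) : ℝ)|)⁻¹) ^ 2) * ((∑' m : ℤ, ‖v m‖ ^ 2) ^ 3))
      = Real.sqrt (∑' q : {q : ℤ × ℤ // Qcond N q}, ((|((2 * q.1.1 * q.1.2 : ℤ) : ℝ)|)⁻¹) ^ 2) *
        Real.sqrt ((∑' m : ℤ, ‖v m‖ ^ 2) ^ 3) := Real.sqrt_mul hS0 _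
  have hcube : Real.sqrt ((∑' m : ℤ, ‖v m‖ ^ 2) ^ 3) = l2norm v ^ 3 := by
    have h1 : Real.sqrt ((∑' m : ℤ, ‖v m‖ ^ 2) ^ 3)
        = (∑' m : ℤ, ‖v m‖ ^ 2) * Real.sqrt (∑' m : ℤ, ‖v m‖ ^ 2) := by
      rw [show (∑' m : ℤ, ‖v m‖ ^ 2) ^ 3
          = (∑' m : ℤ, ‖v m‖ ^ 2) ^ 2 * (∑' m : ℤ, ‖v m‖ ^ 2) by ring,
        Real.sqrt_mul (sq_nonneg _), Real.sqrt_sq hT0]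
    rw [h1, l2norm, show (Real.sqrt (∑' n : ℤ, ‖v n‖ ^ 2)) ^ 3
        = (Real.sqrt (∑' n : ℤ, ‖v n‖ ^ 2)) ^ 2 * Real.sqrt (∑' n : ℤ, ‖v n‖ ^ 2) by ring,
      Real.sq_sqrt hT0]
  have hSsqrt : Real.sqrt (∑' q : {q : ℤ × ℤ // Qcond N q},
        ((|((2 * q.1.1 * q.1.2 : ℤ) : ℝ)|)⁻¹) ^ 2)
      ≤ N ^ (-(1:ℝ)/2 + δ) * K := by
    calc Real.sqrt (∑' q : {q : ℤ × ℤ // Qcond N q},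
          ((|((2 * q.1.1 * q.1.2 : ℤ) : ℝ)|)⁻¹) ^ 2)
        ≤ Real.sqrt (N ^ (-(1:ℝ) + 2*δ) * (K * K)) := Real.sqrt_le_sqrt hSle
      _ = Real.sqrt (N ^ (-(1:ℝ) + 2*δ)) * Real.sqrt (K * K) :=
          Real.sqrt_mul (Real.rpow_nonneg hN0.le _) _
      _ = N ^ (-(1:ℝ)/2 + δ) * K := by
          rw [Real.sqrt_mul_self hK0, Real.sqrt_eq_rpow, ← Real.rpow_mul hN0.le]
          congr 1
          ring
  have hNδε : N ^ (-(1:ℝ)/2 + δ) ≤ N ^ (-(1:ℝ)/2 + ε) :=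
    Real.rpow_le_rpow_of_exponent_le hN (by linarith)
  have hl2v : (0:ℝ) ≤ l2norm v ^ 3 := pow_nonneg (by rw [l2norm]; exact Real.sqrt_nonneg _) 3
  have hNε0 : (0:ℝ) ≤ N ^ (-(1:ℝ)/2 + ε) := Real.rpow_nonneg hN0.le _
  calc l2norm (N21 N t v)
      ≤ Real.sqrt (∑' q : {q : ℤ × ℤ // Qcond N q},
          ((|((2 * q.1.1 * q.1.2 : ℤ) : ℝ)|)⁻¹) ^ 2) *
        Real.sqrt ((∑' m : ℤ, ‖v m‖ ^ 2) ^ 3) := by rw [← hsplit2]; exact hfin1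
    _ = Real.sqrt (∑' q : {q : ℤ × ℤ // Qcond N q},
          ((|((2 * q.1.1 * q.1.2 : ℤ) : ℝ)|)⁻¹) ^ 2) * (l2norm v ^ 3) := by rw [hcube]
    _ ≤ (N ^ (-(1:ℝ)/2 + δ) * K) * (l2norm v ^ 3) :=
        mul_le_mul_of_nonneg_right hSsqrt hl2v
    _ ≤ (N ^ (-(1:ℝ)/2 + ε) * K) * (l2norm v ^ 3) := by
        have := mul_le_mul_of_nonneg_right hNδε hK0
        exact mul_le_mul_of_nonneg_right this hl2v
    _ ≤ (K + 1) * N ^ (-(1:ℝ)/2 + ε) * l2norm v ^ 3 := by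
        have hKK : N ^ (-(1:ℝ)/2 + ε) * K ≤ (K + 1) * N ^ (-(1:ℝ)/2 + ε) := by
          rw [mul_comm]
          exact mul_le_mul_of_nonneg_right (by linarith) hNε0
        exact mul_le_mul_of_nonneg_right hKK hl2v
end

section
/- For every ε > 0 there exists C > 0 such that for every real N ≥ 1, every t ∈ ℝ, and all v, w ∈ ℓ²(ℤ; ℂ), with N₂₁(v)(n) := ∑_{(n₁,n₂,n₃): n = n₁ − n₂ + n₃, n₂ ∉ {n₁,n₃}, |Φ| > N} (e^{−iΦt}/Φ) · v_{n₁} · conj(v_{n₂}) · v_{n₃} where Φ = 2(n − n₁)(n − n₃) (an absolutely convergent series for each n), one has ‖N₂₁(v) − N₂₁(w)‖ ≤ C N^{−1/2 + ε} (‖v‖² + ‖w‖²) ‖v − w‖ in ℓ²(ℤ; ℂ). -/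
open scoped BigOperators ComplexConjugate

/- ### Auxiliary machinery -/

set_option maxHeartbeats 1000000

open scoped ENNReal NNReal

open scoped Classical in
noncomputable def cR21 (N : ℝ) (a b : ℤ) : ℝ :=
  if a ≠ 0 ∧ b ≠ 0 ∧ N < |((2 * a * b : ℤ) : ℝ)| then |((2 * a * b : ℤ) : ℝ)|⁻¹ else 0

lemma cR21_nonneg (N : ℝ) (a b : ℤ) : 0 ≤ cR21 N a b := by
  unfold cR21; split_ifs <;> positivity

noncomputable def cE21 (N : ℝ) (a b : ℤ) : ℝ≥0∞ := ENNReal.ofReal (cR21 N a b)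

noncomputable def S21 (N : ℝ) : ℝ≥0∞ := ∑' q : ℤ × ℤ, (cE21 N q.1 q.2) ^ 2

noncomputable def A21 (N : ℝ) (F G H : ℤ → ℝ≥0∞) (n : ℤ) : ℝ≥0∞ :=
  ∑' q : ℤ × ℤ, cE21 N q.1 q.2 * (F (n - q.1) * G (n - q.1 - q.2) * H (n - q.2))

noncomputable def B21 (F G H : ℤ → ℝ≥0∞) (n : ℤ) : ℝ≥0∞ :=
  ∑' q : ℤ × ℤ, (F (n - q.1) * G (n - q.1 - q.2) * H (n - q.2)) ^ 2

lemma enn_cs {ι : Type*} [Countable ι] [MeasurableSpace ι] [MeasurableSingletonClass ι]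
    (f g : ι → ℝ≥0∞) :
    (∑' q, f q * g q) ^ 2 ≤ (∑' q, f q ^ 2) * (∑' q, g q ^ 2) := by
  have hconj : (2:ℝ).HolderConjugate 2 := by rw [Real.holderConjugate_iff]; norm_num
  have hf : AEMeasurable f (MeasureTheory.Measure.count) :=
    (measurable_of_countable f).aemeasurable
  have hg : AEMeasurable g (MeasureTheory.Measure.count) :=
    (measurable_of_countable g).aemeasurable
  have h := ENNReal.lintegral_mul_le_Lp_mul_Lq MeasureTheory.Measure.count hconj hf hg
  simp only [Pi.mul_apply] at h
  rw [MeasureTheory.lintegral_count, MeasureTheory.lintegral_count,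
    MeasureTheory.lintegral_count] at h
  have e2 : ∀ x : ℝ≥0∞, x ^ (2:ℝ) = x ^ 2 := fun x => by
    rw [show (2:ℝ) = ((2:ℕ):ℝ) by norm_num, ENNReal.rpow_natCast]
  have hsq : ∀ x : ℝ≥0∞, (x ^ ((1:ℝ)/2)) ^ 2 = x := fun x => by
    rw [← e2, ← ENNReal.rpow_mul]; norm_num
  simp only [e2] at h
  calc (∑' q, f q * g q) ^ 2
      ≤ ((∑' q, f q ^ 2) ^ ((1:ℝ)/2) * (∑' q, g q ^ 2) ^ ((1:ℝ)/2)) ^ 2 := by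
        exact pow_le_pow_left₀ zero_le h 2
    _ = (∑' q, f q ^ 2) * (∑' q, g q ^ 2) := by rw [mul_pow, hsq, hsq]

lemma A21_sq_le (N : ℝ) (F G H : ℤ → ℝ≥0∞) (n : ℤ) :
    A21 N F G H n ^ 2 ≤ S21 N * B21 F G H n :=
  enn_cs (fun q : ℤ × ℤ => cE21 N q.1 q.2)
    (fun q : ℤ × ℤ => F (n - q.1) * G (n - q.1 - q.2) * H (n - q.2))

def tripleEquiv : ℤ × ℤ × ℤ ≃ ℤ × ℤ × ℤ where
  toFun r := (r.1 - r.2.1 + r.2.2, r.2.2 - r.2.1, r.1 - r.2.1)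
  invFun s := (s.1 - s.2.1, s.1 - s.2.1 - s.2.2, s.1 - s.2.2)
  left_inv := by rintro ⟨x, y, z⟩; simp only [Prod.mk.injEq]; omega
  right_inv := by rintro ⟨n, a, b⟩; simp only [Prod.mk.injEq]; omega

lemma triple_reindex (F G H : ℤ → ℝ≥0∞) :
    ∑' (n : ℤ), ∑' (q : ℤ × ℤ), F (n - q.1) * G (n - q.1 - q.2) * H (n - q.2)
      = (∑' x, F x) * (∑' x, G x) * (∑' x, H x) := by
  have h1 : ∑' (n : ℤ), ∑' (q : ℤ × ℤ), F (n - q.1) * G (n - q.1 - q.2) * H (n - q.2)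
      = ∑' r : ℤ × ℤ × ℤ, F (r.1 - r.2.1) * G (r.1 - r.2.1 - r.2.2) * H (r.1 - r.2.2) :=
    (ENNReal.tsum_prod (f := fun (n : ℤ) (q : ℤ × ℤ) =>
      F (n - q.1) * G (n - q.1 - q.2) * H (n - q.2))).symm
  have h2 : ∑' r : ℤ × ℤ × ℤ, F (r.1 - r.2.1) * G (r.1 - r.2.1 - r.2.2) * H (r.1 - r.2.2)
      = ∑' r : ℤ × ℤ × ℤ, F r.1 * G r.2.1 * H r.2.2 := by
    rw [← Equiv.tsum_eq tripleEquiv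
      (fun r : ℤ × ℤ × ℤ => F (r.1 - r.2.1) * G (r.1 - r.2.1 - r.2.2) * H (r.1 - r.2.2))]
    apply tsum_congr
    rintro ⟨x, y, z⟩
    simp only [tripleEquiv, Equiv.coe_fn_mk]
    have e1 : x - y + z - (z - y) = x := by ring
    have e2 : x - (x - y) = y := by ring
    have e3 : x - y + z - (x - y) = z := by ring
    rw [e1, e2, e3]
  have h3 : ∑' r : ℤ × ℤ × ℤ, F r.1 * G r.2.1 * H r.2.2
      = (∑' x, F x) * (∑' x, G x) * (∑' x, H x) := by
    rw [ENNReal.tsum_prod (f := fun (a : ℤ) (q : ℤ × ℤ) => F a * G q.1 * H q.2)]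
    have inner : ∀ a : ℤ, ∑' q : ℤ × ℤ, F a * G q.1 * H q.2
        = F a * ((∑' x, G x) * (∑' x, H x)) := by
      intro a
      simp_rw [mul_assoc, ENNReal.tsum_mul_left]
      congr 1
      rw [ENNReal.tsum_prod (f := fun (y z : ℤ) => G y * H z)]
      simp_rw [ENNReal.tsum_mul_left]
      rw [ENNReal.tsum_mul_right]
    calc ∑' (a : ℤ) (q : ℤ × ℤ), F a * G q.1 * H q.2
        = ∑' a : ℤ, F a * ((∑' x, G x) * (∑' x, H x)) := tsum_congr inner
      _ = (∑' x, F x) * (∑' x, G x) * (∑' x, H x) := by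
          rw [ENNReal.tsum_mul_right]; ring
  rw [h1, h2, h3]

lemma tsum_B21 (F G H : ℤ → ℝ≥0∞) :
    ∑' n : ℤ, B21 F G H n = (∑' x, F x ^ 2) * (∑' x, G x ^ 2) * (∑' x, H x ^ 2) := by
  have := triple_reindex (fun m => F m ^ 2) (fun m => G m ^ 2) (fun m => H m ^ 2)
  rw [← this]
  unfold B21
  exact tsum_congr fun n => tsum_congr fun q => by rw [mul_pow, mul_pow]

lemma S21_le {ε0 : ℝ} (hε0 : 0 < ε0) (hε1 : ε0 ≤ 1/2) {N : ℝ} (hN : 1 ≤ N) :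
    S21 N ≤ ENNReal.ofReal (N ^ (ε0 - 1) * (∑' a : ℤ, |(a:ℝ)| ^ (-(1+ε0))) ^ 2) := by
  set k : ℤ → ℝ := fun a => |(a:ℝ)| ^ (-(1+ε0)) with hkdef
  have hk : Summable k := Real.summable_abs_int_rpow (by linarith)
  have hknn : ∀ a, 0 ≤ k a := fun a => Real.rpow_nonneg (abs_nonneg _) _
  have hm : Summable (fun q : ℤ × ℤ => N ^ (ε0 - 1) * (k q.1 * k q.2)) :=
    (hk.mul_of_nonneg hk hknn hknn).mul_left _
  have hpt : ∀ q : ℤ × ℤ, cR21 N q.1 q.2 ^ 2 ≤ N ^ (ε0 - 1) * (k q.1 * k q.2) := by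
    rintro ⟨a, b⟩
    simp only [cR21]
    split_ifs with h
    · obtain ⟨ha, hb, hlt⟩ := h
      set x : ℝ := |((2 * a * b : ℤ) : ℝ)| with hxdef
      have hA : (1:ℝ) ≤ |(a:ℝ)| := by
        have := Int.one_le_abs ha
        calc (1:ℝ) ≤ ((|a| : ℤ) : ℝ) := by exact_mod_cast this
          _ = |(a:ℝ)| := by push_cast [Int.cast_abs]; ring
      have hB : (1:ℝ) ≤ |(b:ℝ)| := by
        have := Int.one_le_abs hb
        calc (1:ℝ) ≤ ((|b| : ℤ) : ℝ) := by exact_mod_cast this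
          _ = |(b:ℝ)| := by push_cast [Int.cast_abs]; ring
      have hx : x = 2 * |(a:ℝ)| * |(b:ℝ)| := by
        rw [hxdef]; push_cast; rw [abs_mul, abs_mul]; norm_num
      have hNx : N < x := hlt
      have hx0 : 0 < x := lt_of_lt_of_le (by linarith) hNx.le
      have hab0 : 0 < |(a:ℝ)| * |(b:ℝ)| := by nlinarith
      have habx : |(a:ℝ)| * |(b:ℝ)| ≤ x := by rw [hx]; nlinarith
      have key : x ^ (-(2:ℝ)) ≤ N ^ (ε0 - 1) * (k a * k b) := by
        have h1 : x ^ (-(2:ℝ)) = x ^ (ε0 - 1) * x ^ (-(1+ε0)) := by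
          rw [← Real.rpow_add hx0]; ring_nf
        have h2 : x ^ (ε0 - 1) ≤ N ^ (ε0 - 1) :=
          Real.rpow_le_rpow_of_nonpos (by linarith) hNx.le (by linarith)
        have h3 : x ^ (-(1+ε0)) ≤ (|(a:ℝ)| * |(b:ℝ)|) ^ (-(1+ε0)) :=
          Real.rpow_le_rpow_of_nonpos hab0 habx (by linarith)
        have h4 : (|(a:ℝ)| * |(b:ℝ)|) ^ (-(1+ε0)) = k a * k b := by
          rw [hkdef]; exact Real.mul_rpow (abs_nonneg _) (abs_nonneg _)
        calc x ^ (-(2:ℝ)) = x ^ (ε0 - 1) * x ^ (-(1+ε0)) := h1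
          _ ≤ N ^ (ε0 - 1) * (|(a:ℝ)| * |(b:ℝ)|) ^ (-(1+ε0)) := by
              apply mul_le_mul h2 h3 (Real.rpow_nonneg hx0.le _)
                (Real.rpow_nonneg (by linarith) _)
          _ = N ^ (ε0 - 1) * (k a * k b) := by rw [h4]
      have hxinv : (x⁻¹) ^ 2 = x ^ (-(2:ℝ)) := by
        rw [Real.rpow_neg hx0.le, show (2:ℝ) = ((2:ℕ):ℝ) by norm_num, Real.rpow_natCast,
          inv_pow]
      rw [hxinv]; exact key
    · have h0 : (0:ℝ) ^ 2 = 0 := by norm_num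
      rw [h0]
      have := hknn a; have := hknn b
      have hN0 : (0:ℝ) ≤ N ^ (ε0 - 1) := Real.rpow_nonneg (by linarith) _
      positivity
  have hcsum : Summable (fun q : ℤ × ℤ => cR21 N q.1 q.2 ^ 2) :=
    hm.of_nonneg_of_le (fun q => sq_nonneg _) hpt
  have hsum_le : ∑' q : ℤ × ℤ, cR21 N q.1 q.2 ^ 2
      ≤ ∑' q : ℤ × ℤ, N ^ (ε0 - 1) * (k q.1 * k q.2) := Summable.tsum_le_tsum hpt hcsum hm
  have heval : ∑' q : ℤ × ℤ, N ^ (ε0 - 1) * (k q.1 * k q.2)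
      = N ^ (ε0 - 1) * (∑' a : ℤ, k a) ^ 2 := by
    rw [tsum_mul_left]
    congr 1
    have hprod : Summable (fun q : ℤ × ℤ => k q.1 * k q.2) :=
      hk.mul_of_nonneg hk hknn hknn
    rw [Summable.tsum_prod' hprod (fun b : ℤ => hk.mul_left (k b))]
    simp_rw [tsum_mul_left]
    rw [tsum_mul_right, sq]
  calc S21 N = ∑' q : ℤ × ℤ, ENNReal.ofReal (cR21 N q.1 q.2 ^ 2) := by
        unfold S21 cE21
        exact tsum_congr fun q => (ENNReal.ofReal_pow (cR21_nonneg _ _ _) 2).symm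
    _ = ENNReal.ofReal (∑' q : ℤ × ℤ, cR21 N q.1 q.2 ^ 2) :=
        (ENNReal.ofReal_tsum_of_nonneg (fun q => sq_nonneg _) hcsum).symm
    _ ≤ ENNReal.ofReal (N ^ (ε0 - 1) * (∑' a : ℤ, |(a:ℝ)| ^ (-(1+ε0))) ^ 2) := by
        apply ENNReal.ofReal_le_ofReal
        rw [← heval]; exact hsum_le

lemma norm_exp_div (t : ℝ) (m : ℤ) :
    ‖Complex.exp (-Complex.I * ((m : ℤ) : ℂ) * (t : ℂ)) / ((m : ℤ) : ℂ)‖ = |(m : ℝ)|⁻¹ := by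
  rw [norm_div]
  have h1 : ‖Complex.exp (-Complex.I * ((m : ℤ) : ℂ) * (t : ℂ))‖ = 1 := by
    rw [Complex.norm_exp]
    have : (-Complex.I * ((m : ℤ) : ℂ) * (t : ℂ)).re = 0 := by
      simp [Complex.mul_re]
    rw [this, Real.exp_zero]
  rw [h1, Complex.norm_intCast, one_div]

lemma prod3_diff (x1 x2 x3 y1 y2 y3 : ℂ) :
    ‖x1 * conj x2 * x3 - y1 * conj y2 * y3‖ ≤
      ‖x1 - y1‖ * ‖x2‖ * ‖x3‖ + ‖y1‖ * ‖x2 - y2‖ * ‖x3‖ + ‖y1‖ * ‖y2‖ * ‖x3 - y3‖ := by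
  have h : x1 * conj x2 * x3 - y1 * conj y2 * y3
      = (x1 - y1) * conj x2 * x3 + y1 * (conj x2 - conj y2) * x3 + y1 * conj y2 * (x3 - y3) := by
    ring
  rw [h]
  refine norm_add₃_le.trans ?_
  simp only [← map_sub, norm_mul, RCLike.norm_conj, le_refl]

lemma lp_cond {N : ℝ} {n : ℤ} {p : ℤ × ℤ × ℤ} (hp : largePhase N n p) :
    (n - p.1 ≠ 0 ∧ n - p.2.2 ≠ 0 ∧ N < |((2 * (n - p.1) * (n - p.2.2) : ℤ) : ℝ)|) := by
  obtain ⟨h1, h2, h3, h4⟩ := hp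
  exact ⟨by omega, by omega, h4⟩

lemma cR21_eq {N : ℝ} {n : ℤ} {p : ℤ × ℤ × ℤ} (hp : largePhase N n p) :
    cR21 N (n - p.1) (n - p.2.2) = |((phase n p : ℤ) : ℝ)|⁻¹ := by
  unfold cR21
  rw [if_pos (lp_cond hp)]
  rfl

lemma dterm_le {N : ℝ} (t : ℝ) (v w : ℤ → ℂ) {n : ℤ} {p : ℤ × ℤ × ℤ}
    (hp : largePhase N n p) :
    ‖term21 t v n p - term21 t w n p‖ ≤ cR21 N (n - p.1) (n - p.2.2) *
      (‖v p.1 - w p.1‖ * ‖v p.2.1‖ * ‖v p.2.2‖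
        + ‖w p.1‖ * ‖v p.2.1 - w p.2.1‖ * ‖v p.2.2‖
        + ‖w p.1‖ * ‖w p.2.1‖ * ‖v p.2.2 - w p.2.2‖) := by
  unfold term21
  set e : ℂ := Complex.exp (-Complex.I * ((phase n p : ℤ) : ℂ) * (t : ℂ)) / ((phase n p : ℤ) : ℂ)
    with hedef
  have h : e * v p.1 * conj (v p.2.1) * v p.2.2 - e * w p.1 * conj (w p.2.1) * w p.2.2
      = e * (v p.1 * conj (v p.2.1) * v p.2.2 - w p.1 * conj (w p.2.1) * w p.2.2) := by ring
  rw [h, norm_mul]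
  have he : ‖e‖ = cR21 N (n - p.1) (n - p.2.2) := by
    rw [hedef, norm_exp_div, cR21_eq hp]
  rw [he]
  exact mul_le_mul_of_nonneg_left (prod3_diff _ _ _ _ _ _) (by
    rw [← he]; exact norm_nonneg _)

lemma term_le {N : ℝ} (t : ℝ) (u : ℤ → ℂ) {n : ℤ} {p : ℤ × ℤ × ℤ}
    (hp : largePhase N n p) :
    ‖term21 t u n p‖ ≤ cR21 N (n - p.1) (n - p.2.2) * (‖u p.1‖ * ‖u p.2.1‖ * ‖u p.2.2‖) := by
  unfold term21
  rw [norm_mul, norm_mul, norm_mul, norm_exp_div, RCLike.norm_conj, cR21_eq hp]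
  exact le_of_eq (by ring)

lemma emap_inj (N : ℝ) (n : ℤ) :
    Function.Injective (fun p : {p : ℤ × ℤ × ℤ // largePhase N n p} =>
      ((n - p.1.1, n - p.1.2.2) : ℤ × ℤ)) := by
  rintro ⟨⟨a1, a2, a3⟩, ha⟩ ⟨⟨b1, b2, b3⟩, hb⟩ h
  simp only [Prod.mk.injEq] at h
  have h1 : n = a1 - a2 + a3 := ha.1
  have h2 : n = b1 - b2 + b3 := hb.1
  apply Subtype.ext
  simp only [Prod.mk.injEq]
  omega

lemma ofReal_triple (x y z : ℝ) (hx : 0 ≤ x) (hy : 0 ≤ y) :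
    ENNReal.ofReal (x * y * z)
      = ENNReal.ofReal x * ENNReal.ofReal y * ENNReal.ofReal z := by
  rw [ENNReal.ofReal_mul (by positivity), ENNReal.ofReal_mul hx]

lemma tsum_sub_le (N t : ℝ) (n : ℤ) (v w : ℤ → ℂ) :
    ∑' p : {p : ℤ × ℤ × ℤ // largePhase N n p},
        ENNReal.ofReal ‖term21 t v n p.1 - term21 t w n p.1‖
      ≤ A21 N (fun m => ENNReal.ofReal ‖v m - w m‖) (fun m => ENNReal.ofReal ‖v m‖)
            (fun m => ENNReal.ofReal ‖v m‖) n
        + A21 N (fun m => ENNReal.ofReal ‖w m‖) (fun m => ENNReal.ofReal ‖v m - w m‖)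
            (fun m => ENNReal.ofReal ‖v m‖) n
        + A21 N (fun m => ENNReal.ofReal ‖w m‖) (fun m => ENNReal.ofReal ‖w m‖)
            (fun m => ENNReal.ofReal ‖v m - w m‖) n := by
  set g : ℤ × ℤ → ℝ≥0∞ := fun q => ENNReal.ofReal (cR21 N q.1 q.2 *
    (‖v (n - q.1) - w (n - q.1)‖ * ‖v (n - q.1 - q.2)‖ * ‖v (n - q.2)‖
      + ‖w (n - q.1)‖ * ‖v (n - q.1 - q.2) - w (n - q.1 - q.2)‖ * ‖v (n - q.2)‖
      + ‖w (n - q.1)‖ * ‖w (n - q.1 - q.2)‖ * ‖v (n - q.2) - w (n - q.2)‖)) with hg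
  have hle : (∑' p : {p : ℤ × ℤ × ℤ // largePhase N n p},
      ENNReal.ofReal ‖term21 t v n p.1 - term21 t w n p.1‖) ≤ ∑' q : ℤ × ℤ, g q := by
    apply Summable.tsum_le_tsum_of_inj _ (emap_inj N n) (fun c _ => zero_le) ?_
      ENNReal.summable ENNReal.summable
    rintro ⟨⟨n1, n2, n3⟩, hp⟩
    have h1 : n = n1 - n2 + n3 := hp.1
    have e1 : n - (n - n1) = n1 := by ring
    have e2 : n1 - (n - n3) = n2 := by omega
    have e3 : n - (n - n3) = n3 := by ring
    simp only [hg, e1, e2, e3]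
    exact ENNReal.ofReal_le_ofReal (dterm_le t v w hp)
  refine hle.trans (le_of_eq ?_)
  have hsplit : ∀ q : ℤ × ℤ, g q
      = cE21 N q.1 q.2 * (ENNReal.ofReal ‖v (n - q.1) - w (n - q.1)‖
          * ENNReal.ofReal ‖v (n - q.1 - q.2)‖ * ENNReal.ofReal ‖v (n - q.2)‖)
        + cE21 N q.1 q.2 * (ENNReal.ofReal ‖w (n - q.1)‖
          * ENNReal.ofReal ‖v (n - q.1 - q.2) - w (n - q.1 - q.2)‖
          * ENNReal.ofReal ‖v (n - q.2)‖)
        + cE21 N q.1 q.2 * (ENNReal.ofReal ‖w (n - q.1)‖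
          * ENNReal.ofReal ‖w (n - q.1 - q.2)‖
          * ENNReal.ofReal ‖v (n - q.2) - w (n - q.2)‖) := by
    intro q
    simp only [hg]
    rw [ENNReal.ofReal_mul (cR21_nonneg _ _ _),
      ENNReal.ofReal_add (by positivity) (by positivity),
      ENNReal.ofReal_add (by positivity) (by positivity),
      ofReal_triple _ _ _ (norm_nonneg _) (norm_nonneg _),
      ofReal_triple _ _ _ (norm_nonneg _) (norm_nonneg _),
      ofReal_triple _ _ _ (norm_nonneg _) (norm_nonneg _),
      mul_add, mul_add]
    rfl
  calc ∑' q : ℤ × ℤ, g q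
      = ∑' q : ℤ × ℤ, (cE21 N q.1 q.2 * (ENNReal.ofReal ‖v (n - q.1) - w (n - q.1)‖
          * ENNReal.ofReal ‖v (n - q.1 - q.2)‖ * ENNReal.ofReal ‖v (n - q.2)‖)
        + cE21 N q.1 q.2 * (ENNReal.ofReal ‖w (n - q.1)‖
          * ENNReal.ofReal ‖v (n - q.1 - q.2) - w (n - q.1 - q.2)‖
          * ENNReal.ofReal ‖v (n - q.2)‖)
        + cE21 N q.1 q.2 * (ENNReal.ofReal ‖w (n - q.1)‖
          * ENNReal.ofReal ‖w (n - q.1 - q.2)‖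
          * ENNReal.ofReal ‖v (n - q.2) - w (n - q.2)‖)) := tsum_congr hsplit
    _ = _ := by rw [ENNReal.tsum_add, ENNReal.tsum_add]; rfl

lemma tsum_single_le (N t : ℝ) (n : ℤ) (u : ℤ → ℂ) :
    ∑' p : {p : ℤ × ℤ × ℤ // largePhase N n p}, ENNReal.ofReal ‖term21 t u n p.1‖
      ≤ A21 N (fun m => ENNReal.ofReal ‖u m‖) (fun m => ENNReal.ofReal ‖u m‖)
          (fun m => ENNReal.ofReal ‖u m‖) n := by
  have hle : (∑' p : {p : ℤ × ℤ × ℤ // largePhase N n p},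
      ENNReal.ofReal ‖term21 t u n p.1‖)
      ≤ ∑' q : ℤ × ℤ, ENNReal.ofReal (cR21 N q.1 q.2 *
          (‖u (n - q.1)‖ * ‖u (n - q.1 - q.2)‖ * ‖u (n - q.2)‖)) := by
    apply Summable.tsum_le_tsum_of_inj _ (emap_inj N n) (fun c _ => zero_le) ?_
      ENNReal.summable ENNReal.summable
    rintro ⟨⟨n1, n2, n3⟩, hp⟩
    have h1 : n = n1 - n2 + n3 := hp.1
    have e1 : n - (n - n1) = n1 := by ring
    have e2 : n1 - (n - n3) = n2 := by omega
    have e3 : n - (n - n3) = n3 := by ring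
    simp only [e1, e2, e3]
    exact ENNReal.ofReal_le_ofReal (term_le t u hp)
  refine hle.trans (le_of_eq (tsum_congr fun q => ?_))
  rw [ENNReal.ofReal_mul (cR21_nonneg _ _ _),
    ofReal_triple _ _ _ (norm_nonneg _) (norm_nonneg _)]
  rfl

lemma sq2_eq (u : ℤ → ℂ) (hu : Summable fun m : ℤ => ‖u m‖ ^ 2) :
    ∑' m : ℤ, (ENNReal.ofReal ‖u m‖) ^ 2 = ENNReal.ofReal (∑' m : ℤ, ‖u m‖ ^ 2) := by
  rw [ENNReal.ofReal_tsum_of_nonneg (fun m => sq_nonneg _) hu]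
  exact tsum_congr fun m => (ENNReal.ofReal_pow (norm_nonneg _) 2).symm

lemma A21_ne_top {N : ℝ} {F G H : ℤ → ℝ≥0∞} {n : ℤ} (hS : S21 N ≠ ⊤)
    (hF : ∑' m : ℤ, F m ^ 2 ≠ ⊤) (hG : ∑' m : ℤ, G m ^ 2 ≠ ⊤)
    (hH : ∑' m : ℤ, H m ^ 2 ≠ ⊤) :
    A21 N F G H n ≠ ⊤ := by
  intro htop
  have hB : B21 F G H n ≠ ⊤ := by
    have hle := ENNReal.le_tsum (f := fun n' : ℤ => B21 F G H n') n
    rw [tsum_B21] at hle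
    exact ne_top_of_le_ne_top (ENNReal.mul_ne_top (ENNReal.mul_ne_top hF hG) hH) hle
  have h := A21_sq_le N F G H n
  rw [htop] at h
  have h2 : (⊤ : ℝ≥0∞) ^ 2 = ⊤ := by simp
  rw [h2, top_le_iff] at h
  exact (ENNReal.mul_ne_top hS hB) h

lemma summable_term {N : ℝ} (t : ℝ) (n : ℤ) (u : ℤ → ℂ)
    (hu : Summable fun m : ℤ => ‖u m‖ ^ 2) (hS : S21 N ≠ ⊤) :
    Summable fun p : {p : ℤ × ℤ × ℤ // largePhase N n p} => term21 t u n p.1 := by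
  have hU : ∑' m : ℤ, (fun m => ENNReal.ofReal ‖u m‖) m ^ 2 ≠ ⊤ := by
    rw [sq2_eq u hu]; exact ENNReal.ofReal_ne_top
  have h1 : ∑' p : {p : ℤ × ℤ × ℤ // largePhase N n p}, (‖term21 t u n p.1‖₊ : ℝ≥0∞)
      ≤ A21 N (fun m => ENNReal.ofReal ‖u m‖) (fun m => ENNReal.ofReal ‖u m‖)
          (fun m => ENNReal.ofReal ‖u m‖) n := by
    have h := tsum_single_le N t n u
    simpa only [ofReal_norm, enorm_eq_nnnorm] using h
  have hne : ∑' p : {p : ℤ × ℤ × ℤ // largePhase N n p}, (‖term21 t u n p.1‖₊ : ℝ≥0∞) ≠ ⊤ :=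
    ne_top_of_le_ne_top (A21_ne_top hS hU hU hU) h1
  exact (ENNReal.tsum_coe_ne_top_iff_summable.mp hne).of_nnnorm

lemma enn_norm_tsum_le {ι : Type*} (f : ι → ℂ) :
    ENNReal.ofReal ‖∑' i, f i‖ ≤ ∑' i, ENNReal.ofReal ‖f i‖ := by
  by_cases h : Summable fun i => ‖f i‖₊
  · simp only [ofReal_norm, enorm_eq_nnnorm]
    rw [← ENNReal.coe_tsum h]
    exact_mod_cast nnnorm_tsum_le h
  · have htop : ∑' i, (‖f i‖₊ : ℝ≥0∞) = ⊤ := by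
      by_contra h'
      exact h (ENNReal.tsum_coe_ne_top_iff_summable.mp h')
    simp only [ofReal_norm, enorm_eq_nnnorm]
    rw [htop]
    exact le_top

lemma pointwise_bound {N : ℝ} (t : ℝ) (v w : ℤ → ℂ)
    (hv : Summable fun m : ℤ => ‖v m‖ ^ 2) (hw : Summable fun m : ℤ => ‖w m‖ ^ 2)
    (hS : S21 N ≠ ⊤) (n : ℤ) :
    ENNReal.ofReal ‖N21 N t v n - N21 N t w n‖
      ≤ A21 N (fun m => ENNReal.ofReal ‖v m - w m‖) (fun m => ENNReal.ofReal ‖v m‖)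
            (fun m => ENNReal.ofReal ‖v m‖) n
        + A21 N (fun m => ENNReal.ofReal ‖w m‖) (fun m => ENNReal.ofReal ‖v m - w m‖)
            (fun m => ENNReal.ofReal ‖v m‖) n
        + A21 N (fun m => ENNReal.ofReal ‖w m‖) (fun m => ENNReal.ofReal ‖w m‖)
            (fun m => ENNReal.ofReal ‖v m - w m‖) n := by
  have hsv := summable_term t n v hv hS
  have hsw := summable_term t n w hw hS
  have hdiff : N21 N t v n - N21 N t w n
      = ∑' p : {p : ℤ × ℤ × ℤ // largePhase N n p}, (term21 t v n p.1 - term21 t w n p.1) := by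
    unfold N21
    exact (Summable.tsum_sub hsv hsw).symm
  rw [hdiff]
  exact (enn_norm_tsum_le _).trans (tsum_sub_le N t n v w)

lemma nn_add_sq (x y : ℝ≥0) : (x + y) ^ 2 ≤ 2 * (x ^ 2 + y ^ 2) := by
  rw [← NNReal.coe_le_coe]
  push_cast
  nlinarith [sq_nonneg ((x:ℝ) - y)]

lemma enn_add_sq (x y : ℝ≥0∞) : (x + y) ^ 2 ≤ 2 * (x ^ 2 + y ^ 2) := by
  rcases eq_or_ne x ⊤ with rfl | hx
  · have h : (2:ℝ≥0∞) * ((⊤:ℝ≥0∞) ^ 2 + y ^ 2) = ⊤ := by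
      rw [ENNReal.top_pow (by norm_num), top_add, ENNReal.mul_top (by norm_num)]
    rw [h]; exact le_top
  rcases eq_or_ne y ⊤ with rfl | hy
  · have h : (2:ℝ≥0∞) * (x ^ 2 + (⊤:ℝ≥0∞) ^ 2) = ⊤ := by
      rw [ENNReal.top_pow (by norm_num), add_top, ENNReal.mul_top (by norm_num)]
    rw [h]; exact le_top
  lift x to ℝ≥0 using hx
  lift y to ℝ≥0 using hy
  exact_mod_cast nn_add_sq x y

lemma enn_add3_sq (a b c : ℝ≥0∞) : (a + b + c) ^ 2 ≤ 4 * (a ^ 2 + b ^ 2 + c ^ 2) := by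
  calc (a + b + c) ^ 2 = (a + (b + c)) ^ 2 := by rw [add_assoc]
    _ ≤ 2 * (a ^ 2 + (b + c) ^ 2) := enn_add_sq a (b + c)
    _ ≤ 2 * (a ^ 2 + 2 * (b ^ 2 + c ^ 2)) := mul_le_mul' le_rfl (add_le_add le_rfl (enn_add_sq b c))
    _ = 2 * a ^ 2 + (4 * b ^ 2 + 4 * c ^ 2) := by ring
    _ ≤ 4 * a ^ 2 + (4 * b ^ 2 + 4 * c ^ 2) :=
        add_le_add (mul_le_mul' (by norm_num) le_rfl) le_rfl
    _ = 4 * (a ^ 2 + b ^ 2 + c ^ 2) := by ring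

lemma summable_of_ofReal_tsum_ne_top {f : ℤ → ℝ} (hf : ∀ n, 0 ≤ f n)
    (h : ∑' n : ℤ, ENNReal.ofReal (f n) ≠ ⊤) : Summable f := by
  have h1 : Summable fun n : ℤ => (f n).toNNReal := ENNReal.tsum_coe_ne_top_iff_summable.mp h
  have h2 := NNReal.summable_coe.mpr h1
  refine h2.congr fun n => ?_
  exact Real.coe_toNNReal _ (hf n)
/-- **Lipschitz bound for the boundary term `N₂₁`.** For every `ε > 0` there is `C > 0` such
that for every `N ≥ 1`, `t ∈ ℝ`, and all `v, w ∈ ℓ²(ℤ;ℂ)`: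
`‖N₂₁(v) − N₂₁(w)‖ ≤ C N^{−1/2+ε} (‖v‖² + ‖w‖²) ‖v − w‖` in `ℓ²(ℤ;ℂ)`. -/
theorem N21_diff_bound : ∀ ε > (0:ℝ), ∃ C > (0:ℝ), ∀ N : ℝ, 1 ≤ N → ∀ t : ℝ,
    ∀ v w : ℤ → ℂ, Memℓ2 v → Memℓ2 w →
    Memℓ2 (fun n => N21 N t v n - N21 N t w n) ∧
    l2norm (fun n => N21 N t v n - N21 N t w n)
      ≤ C * N ^ (-(1:ℝ)/2 + ε) * (l2norm v ^ 2 + l2norm w ^ 2) *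
        l2norm (fun n => v n - w n) := by
  intro ε hε
  set ε0 : ℝ := min ε (1/2) with hε0def
  have hε00 : 0 < ε0 := lt_min hε (by norm_num)
  have hε0half : ε0 ≤ 1/2 := min_le_right _ _
  have hε0ε : ε0 ≤ ε := min_le_left _ _
  set K : ℝ := ∑' a : ℤ, |(a:ℝ)| ^ (-(1+ε0)) with hKdef
  have hK0 : 0 ≤ K := tsum_nonneg fun a => Real.rpow_nonneg (abs_nonneg _) _
  refine ⟨Real.sqrt 12 * (K + 1), by positivity, ?_⟩
  intro N hN t v w hv hw
  have hN0 : (0:ℝ) < N := by linarith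
  set xv : ℝ := ∑' m : ℤ, ‖v m‖ ^ 2 with hxv
  set xw : ℝ := ∑' m : ℤ, ‖w m‖ ^ 2 with hxw
  have hd : Memℓ2 (fun n => v n - w n) := by
    refine Summable.of_nonneg_of_le (fun n => sq_nonneg _) (fun n => ?_) ((hv.add hw).mul_left 2)
    show ‖v n - w n‖ ^ 2 ≤ 2 * (‖v n‖ ^ 2 + ‖w n‖ ^ 2)
    have h := norm_sub_le (v n) (w n)
    have h2 : ‖v n - w n‖ ^ 2 ≤ (‖v n‖ + ‖w n‖) ^ 2 := pow_le_pow_left₀ (norm_nonneg _) h 2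
    nlinarith [sq_nonneg (‖v n‖ - ‖w n‖)]
  set xd : ℝ := ∑' m : ℤ, ‖v m - w m‖ ^ 2 with hxd
  have hxv0 : 0 ≤ xv := tsum_nonneg fun m => sq_nonneg _
  have hxw0 : 0 ≤ xw := tsum_nonneg fun m => sq_nonneg _
  have hxd0 : 0 ≤ xd := tsum_nonneg fun m => sq_nonneg _
  set Vf := fun m : ℤ => ENNReal.ofReal ‖v m‖ with hVf
  set Wf := fun m : ℤ => ENNReal.ofReal ‖w m‖ with hWf
  set Df := fun m : ℤ => ENNReal.ofReal ‖v m - w m‖ with hDf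
  have hX : ∑' m : ℤ, Vf m ^ 2 = ENNReal.ofReal xv := by rw [hVf, hxv]; exact sq2_eq v hv
  have hY : ∑' m : ℤ, Wf m ^ 2 = ENNReal.ofReal xw := by rw [hWf, hxw]; exact sq2_eq w hw
  have hZ : ∑' m : ℤ, Df m ^ 2 = ENNReal.ofReal xd := by rw [hDf, hxd]; exact sq2_eq _ hd
  have hS_le : S21 N ≤ ENNReal.ofReal (N ^ (ε0 - 1) * K ^ 2) := by
    have h := S21_le hε00 hε0half hN
    rw [← hKdef] at h
    exact h
  have hS : S21 N ≠ ⊤ := ne_top_of_le_ne_top ENNReal.ofReal_ne_top hS_le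
  have hpt : ∀ n : ℤ, (ENNReal.ofReal ‖N21 N t v n - N21 N t w n‖) ^ 2
      ≤ 4 * (S21 N * (B21 Df Vf Vf n + B21 Wf Df Vf n + B21 Wf Wf Df n)) := by
    intro n
    have h0 := pointwise_bound t v w hv hw hS n
    rw [← hVf, ← hWf, ← hDf] at h0
    calc (ENNReal.ofReal ‖N21 N t v n - N21 N t w n‖) ^ 2
        ≤ (A21 N Df Vf Vf n + A21 N Wf Df Vf n + A21 N Wf Wf Df n) ^ 2 :=
          pow_le_pow_left₀ zero_le h0 2
      _ ≤ 4 * (A21 N Df Vf Vf n ^ 2 + A21 N Wf Df Vf n ^ 2 + A21 N Wf Wf Df n ^ 2) :=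
          enn_add3_sq _ _ _
      _ ≤ 4 * (S21 N * B21 Df Vf Vf n + S21 N * B21 Wf Df Vf n + S21 N * B21 Wf Wf Df n) :=
          mul_le_mul' le_rfl (add_le_add (add_le_add (A21_sq_le _ _ _ _ _)
            (A21_sq_le _ _ _ _ _)) (A21_sq_le _ _ _ _ _))
      _ = 4 * (S21 N * (B21 Df Vf Vf n + B21 Wf Df Vf n + B21 Wf Wf Df n)) := by ring
  have hB123 : ∑' n : ℤ, (B21 Df Vf Vf n + B21 Wf Df Vf n + B21 Wf Wf Df n)
      = ENNReal.ofReal xd * ENNReal.ofReal xv * ENNReal.ofReal xv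
        + ENNReal.ofReal xw * ENNReal.ofReal xd * ENNReal.ofReal xv
        + ENNReal.ofReal xw * ENNReal.ofReal xw * ENNReal.ofReal xd := by
    rw [ENNReal.tsum_add, ENNReal.tsum_add, tsum_B21, tsum_B21, tsum_B21, hX, hY, hZ]
  set R : ℝ := 12 * ((N ^ (ε0 - 1) * K ^ 2) * ((xv + xw) * (xv + xw) * xd)) with hR
  have hR0 : 0 ≤ R := by
    have : (0:ℝ) ≤ N ^ (ε0 - 1) := Real.rpow_nonneg hN0.le _
    rw [hR]; positivity
  have hSigR : (∑' n : ℤ, (ENNReal.ofReal ‖N21 N t v n - N21 N t w n‖) ^ 2)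
      ≤ ENNReal.ofReal R := by
    have hPX : ENNReal.ofReal xv ≤ ENNReal.ofReal (xv + xw) :=
      ENNReal.ofReal_le_ofReal (by linarith)
    have hPY : ENNReal.ofReal xw ≤ ENNReal.ofReal (xv + xw) :=
      ENNReal.ofReal_le_ofReal (by linarith)
    have h1 : ENNReal.ofReal xd * ENNReal.ofReal xv * ENNReal.ofReal xv
        ≤ ENNReal.ofReal (xv + xw) * ENNReal.ofReal (xv + xw) * ENNReal.ofReal xd := by
      calc ENNReal.ofReal xd * ENNReal.ofReal xv * ENNReal.ofReal xv
          = ENNReal.ofReal xv * ENNReal.ofReal xv * ENNReal.ofReal xd := by ring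
        _ ≤ _ := mul_le_mul' (mul_le_mul' hPX hPX) le_rfl
    have h2 : ENNReal.ofReal xw * ENNReal.ofReal xd * ENNReal.ofReal xv
        ≤ ENNReal.ofReal (xv + xw) * ENNReal.ofReal (xv + xw) * ENNReal.ofReal xd := by
      calc ENNReal.ofReal xw * ENNReal.ofReal xd * ENNReal.ofReal xv
          = ENNReal.ofReal xw * ENNReal.ofReal xv * ENNReal.ofReal xd := by ring
        _ ≤ _ := mul_le_mul' (mul_le_mul' hPY hPX) le_rfl
    have h3 : ENNReal.ofReal xw * ENNReal.ofReal xw * ENNReal.ofReal xd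
        ≤ ENNReal.ofReal (xv + xw) * ENNReal.ofReal (xv + xw) * ENNReal.ofReal xd :=
      mul_le_mul' (mul_le_mul' hPY hPY) le_rfl
    have hprod : ENNReal.ofReal xd * ENNReal.ofReal xv * ENNReal.ofReal xv
        + ENNReal.ofReal xw * ENNReal.ofReal xd * ENNReal.ofReal xv
        + ENNReal.ofReal xw * ENNReal.ofReal xw * ENNReal.ofReal xd
        ≤ 3 * (ENNReal.ofReal (xv + xw) * ENNReal.ofReal (xv + xw) * ENNReal.ofReal xd) := by
      calc _ ≤ ENNReal.ofReal (xv + xw) * ENNReal.ofReal (xv + xw) * ENNReal.ofReal xd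
            + ENNReal.ofReal (xv + xw) * ENNReal.ofReal (xv + xw) * ENNReal.ofReal xd
            + ENNReal.ofReal (xv + xw) * ENNReal.ofReal (xv + xw) * ENNReal.ofReal xd :=
          add_le_add (add_le_add h1 h2) h3
        _ = 3 * (ENNReal.ofReal (xv + xw) * ENNReal.ofReal (xv + xw) * ENNReal.ofReal xd) := by
          ring
    calc (∑' n : ℤ, (ENNReal.ofReal ‖N21 N t v n - N21 N t w n‖) ^ 2)
        ≤ ∑' n : ℤ, 4 * (S21 N * (B21 Df Vf Vf n + B21 Wf Df Vf n + B21 Wf Wf Df n)) :=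
          ENNReal.tsum_le_tsum hpt
      _ = 4 * (S21 N * ∑' n : ℤ, (B21 Df Vf Vf n + B21 Wf Df Vf n + B21 Wf Wf Df n)) := by
          rw [ENNReal.tsum_mul_left, ENNReal.tsum_mul_left]
      _ ≤ 4 * (ENNReal.ofReal (N ^ (ε0 - 1) * K ^ 2)
            * (3 * (ENNReal.ofReal (xv + xw) * ENNReal.ofReal (xv + xw) * ENNReal.ofReal xd))) := by
          rw [hB123]
          exact mul_le_mul' le_rfl (mul_le_mul' hS_le hprod)
      _ = 12 * (ENNReal.ofReal (N ^ (ε0 - 1) * K ^ 2)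
            * (ENNReal.ofReal (xv + xw) * ENNReal.ofReal (xv + xw) * ENNReal.ofReal xd)) := by
          ring
      _ = ENNReal.ofReal R := by
          have hs0 : (0:ℝ) ≤ N ^ (ε0 - 1) * K ^ 2 := by
            have : (0:ℝ) ≤ N ^ (ε0 - 1) := Real.rpow_nonneg hN0.le _
            positivity
          have hA0 : (0:ℝ) ≤ (xv + xw) * (xv + xw) := by positivity
          have hA1 : (0:ℝ) ≤ xv + xw := by positivity
          rw [hR, ENNReal.ofReal_mul (by norm_num : (0:ℝ) ≤ 12),
            ENNReal.ofReal_mul hs0, ENNReal.ofReal_mul hA0, ENNReal.ofReal_mul hA1,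
            ENNReal.ofReal_ofNat]
  have hSig0 : (∑' n : ℤ, (ENNReal.ofReal ‖N21 N t v n - N21 N t w n‖) ^ 2)
      = ∑' n : ℤ, ENNReal.ofReal (‖N21 N t v n - N21 N t w n‖ ^ 2) :=
    tsum_congr fun n => (ENNReal.ofReal_pow (norm_nonneg _) 2).symm
  have hmem : Memℓ2 (fun n => N21 N t v n - N21 N t w n) := by
    apply summable_of_ofReal_tsum_ne_top (fun n => sq_nonneg _)
    rw [← hSig0]
    exact ne_top_of_le_ne_top ENNReal.ofReal_ne_top hSigR
  refine ⟨hmem, ?_⟩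
  have hTle : (∑' n : ℤ, ‖N21 N t v n - N21 N t w n‖ ^ 2) ≤ R := by
    have h1 : ENNReal.ofReal (∑' n : ℤ, ‖N21 N t v n - N21 N t w n‖ ^ 2)
        = ∑' n : ℤ, (ENNReal.ofReal ‖N21 N t v n - N21 N t w n‖) ^ 2 := by
      rw [ENNReal.ofReal_tsum_of_nonneg (fun n => sq_nonneg _) hmem, hSig0]
    have h2 := ENNReal.toReal_le_of_le_ofReal hR0 (h1 ▸ hSigR)
    rwa [ENNReal.toReal_ofReal (tsum_nonneg fun n => sq_nonneg _)] at h2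
  have hv2 : l2norm v ^ 2 = xv := by
    show Real.sqrt (∑' n : ℤ, ‖v n‖ ^ 2) ^ 2 = xv
    rw [Real.sq_sqrt (tsum_nonneg fun m => sq_nonneg _)]
  have hw2 : l2norm w ^ 2 = xw := by
    show Real.sqrt (∑' n : ℤ, ‖w n‖ ^ 2) ^ 2 = xw
    rw [Real.sq_sqrt (tsum_nonneg fun m => sq_nonneg _)]
  have hl2d : l2norm (fun n => v n - w n) = Real.sqrt xd := by rw [hxd]; rfl
  rw [hv2, hw2, hl2d]
  have hrhs0 : 0 ≤ Real.sqrt 12 * (K + 1) * N ^ (-(1:ℝ)/2 + ε) * (xv + xw) * Real.sqrt xd := by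
    have h1 : (0:ℝ) ≤ N ^ (-(1:ℝ)/2 + ε) := Real.rpow_nonneg hN0.le _
    positivity
  calc l2norm (fun n => N21 N t v n - N21 N t w n)
      = Real.sqrt (∑' n : ℤ, ‖N21 N t v n - N21 N t w n‖ ^ 2) := rfl
    _ ≤ Real.sqrt R := Real.sqrt_le_sqrt hTle
    _ ≤ Real.sqrt 12 * (K + 1) * N ^ (-(1:ℝ)/2 + ε) * (xv + xw) * Real.sqrt xd := by
        rw [← Real.sqrt_sq hrhs0]
        apply Real.sqrt_le_sqrt
        have hsq12 : Real.sqrt 12 ^ 2 = 12 := Real.sq_sqrt (by norm_num)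
        have hsqd : Real.sqrt xd ^ 2 = xd := Real.sq_sqrt hxd0
        have hNe : N ^ (ε0 - 1) ≤ N ^ (-1 + 2*ε) :=
          Real.rpow_le_rpow_of_exponent_le hN (by linarith)
        have hNsq : (N ^ (-(1:ℝ)/2 + ε)) ^ 2 = N ^ (-1 + 2*ε) := by
          rw [← Real.rpow_natCast (N ^ (-(1:ℝ)/2 + ε)) 2, ← Real.rpow_mul hN0.le]
          congr 1
          push_cast
          ring
        have hK2 : K ^ 2 ≤ (K + 1) ^ 2 := by nlinarith
        have hexp : (Real.sqrt 12 * (K + 1) * N ^ (-(1:ℝ)/2 + ε) * (xv + xw) * Real.sqrt xd) ^ 2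
            = 12 * (((K + 1) ^ 2 * N ^ (-1 + 2*ε)) * ((xv + xw) * (xv + xw) * xd)) := by
          rw [mul_pow, mul_pow, mul_pow, mul_pow, hsq12, hsqd, hNsq]
          ring
        rw [hexp, hR]
        have hmain : N ^ (ε0 - 1) * K ^ 2 ≤ (K + 1) ^ 2 * N ^ (-1 + 2*ε) := by
          calc N ^ (ε0 - 1) * K ^ 2 ≤ N ^ (-1 + 2*ε) * (K + 1) ^ 2 :=
              mul_le_mul hNe hK2 (by positivity) (Real.rpow_nonneg hN0.le _)
            _ = (K + 1) ^ 2 * N ^ (-1 + 2*ε) := by ring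
        have h3 : (0:ℝ) ≤ (xv + xw) * (xv + xw) * xd := by positivity
        have := mul_le_mul_of_nonneg_right hmain h3
        linarith
end

section
/- For every ε > 0 there exists C > 0 such that for every real N ≥ 1, every t ∈ ℝ, and every v ∈ ℓ²(ℤ; ℂ): writing R(v)_m := |v_m|² v_m − 2(∑_{k ∈ ℤ} |v_k|²) v_m, for each n ∈ ℤ the series N₄(v)(n) := ∑_{(n₁,n₂,n₃): n = n₁ − n₂ + n₃, n₂ ∉ {n₁,n₃}, |Φ| > N} (e^{−iΦt}/Φ) · R(v)_{n₁} · conj(v_{n₂}) · v_{n₃}, where Φ = 2(n − n₁)(n − n₃), converges absolutely, and the resulting function belongs to ℓ²(ℤ; ℂ) with ‖N₄(v)‖ ≤ C N^{−1/2 + ε} ‖v‖⁵. -/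
open scoped BigOperators ComplexConjugate

/-- The resonant part `R(v)ₘ = |vₘ|² vₘ − 2(∑ₖ |vₖ|²) vₘ` of the cubic nonlinearity. -/
noncomputable def Rres (v : ℤ → ℂ) (m : ℤ) : ℂ :=
  (‖v m‖ : ℂ) ^ 2 * v m - 2 * ((∑' k : ℤ, ‖v k‖ ^ 2 : ℝ) : ℂ) * v m

/-- The summand `(e^{−iΦt}/Φ) R(v)_{n₁} conj(v_{n₂}) v_{n₃}` of the term `N₄`. -/
noncomputable def term4 (t : ℝ) (v : ℤ → ℂ) (n : ℤ) (p : ℤ × ℤ × ℤ) : ℂ :=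
  Complex.exp (-Complex.I * ((phase n p : ℤ) : ℂ) * (t : ℂ)) / ((phase n p : ℤ) : ℂ) *
    Rres v p.1 * conj (v p.2.1) * v p.2.2

/-- The quintic term `N₄(v)(n)` arising when the time derivative lands on a resonant cubic. -/
noncomputable def N4 (N t : ℝ) (v : ℤ → ℂ) (n : ℤ) : ℂ :=
  ∑' p : {p : ℤ × ℤ × ℤ // largePhase N n p}, term4 t v n p.1

namespace N4Aux

/-! ### Auxiliary weights and Cauchy–Schwarz for `tsum` -/

noncomputable def wt (s : ℝ) (m : ℤ) : ℝ := if m = 0 then 0 else |(m : ℝ)| ^ (-s)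

lemma wt_nonneg (s : ℝ) (m : ℤ) : 0 ≤ wt s m := by
  unfold wt; split
  · exact le_rfl
  · positivity

lemma summable_wt_sq {s : ℝ} (hs : 1/2 < s) : Summable fun m : ℤ => wt s m ^ 2 := by
  have h2s : 1 < 2 * s := by linarith
  refine (Real.summable_abs_int_rpow h2s).of_nonneg_of_le
    (fun m => sq_nonneg _) (fun m => ?_)
  unfold wt
  split
  · next h =>
      subst h
      simpa using Real.rpow_nonneg le_rfl _
  · next h =>
    have hm : (0:ℝ) < |(m:ℝ)| := by
      simp only [abs_pos, Int.cast_ne_zero]; exact h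
    rw [← Real.rpow_natCast (|(m:ℝ)| ^ (-s)) 2, ← Real.rpow_mul (le_of_lt hm)]
    apply le_of_eq
    ring_nf

lemma summable_mul_of_sq {ι : Type*} {f g : ι → ℝ}
    (hf : ∀ i, 0 ≤ f i) (hg : ∀ i, 0 ≤ g i)
    (hf2 : Summable fun i => f i ^ 2) (hg2 : Summable fun i => g i ^ 2) :
    Summable fun i => f i * g i := by
  refine Summable.of_nonneg_of_le (fun i => mul_nonneg (hf i) (hg i)) (fun i => ?_)
    ((hf2.add hg2).div_const 2)
  nlinarith [sq_nonneg (f i - g i)]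

/-- Cauchy–Schwarz inequality for `tsum`s of nonnegative functions. -/
lemma tsum_mul_le_sqrt {ι : Type*} {f g : ι → ℝ}
    (hf : ∀ i, 0 ≤ f i) (hg : ∀ i, 0 ≤ g i)
    (hf2 : Summable fun i => f i ^ 2) (hg2 : Summable fun i => g i ^ 2) :
    ∑' i, f i * g i ≤ Real.sqrt (∑' i, f i ^ 2) * Real.sqrt (∑' i, g i ^ 2) := by
  refine Summable.tsum_le_of_sum_le (summable_mul_of_sq hf hg hf2 hg2) (fun u => ?_)
  have h1 : (∑ i ∈ u, f i * g i) ^ 2 ≤ (∑ i ∈ u, f i ^ 2) * (∑ i ∈ u, g i ^ 2) :=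
    Finset.sum_mul_sq_le_sq_mul_sq u f g
  have h2 : ∑ i ∈ u, f i ^ 2 ≤ ∑' i, f i ^ 2 :=
    Summable.sum_le_tsum u (fun i _ => sq_nonneg _) hf2
  have h3 : ∑ i ∈ u, g i ^ 2 ≤ ∑' i, g i ^ 2 :=
    Summable.sum_le_tsum u (fun i _ => sq_nonneg _) hg2
  have h0 : (0:ℝ) ≤ ∑ i ∈ u, f i * g i :=
    Finset.sum_nonneg fun i _ => mul_nonneg (hf i) (hg i)
  calc ∑ i ∈ u, f i * g i
      = Real.sqrt ((∑ i ∈ u, f i * g i) ^ 2) := (Real.sqrt_sq h0).symm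
    _ ≤ Real.sqrt ((∑' i, f i ^ 2) * (∑' i, g i ^ 2)) := by
        apply Real.sqrt_le_sqrt
        calc (∑ i ∈ u, f i * g i) ^ 2 ≤ (∑ i ∈ u, f i ^ 2) * (∑ i ∈ u, g i ^ 2) := h1
          _ ≤ (∑' i, f i ^ 2) * (∑' i, g i ^ 2) := by
              apply mul_le_mul h2 h3 (Finset.sum_nonneg fun i _ => sq_nonneg _)
                (tsum_nonneg fun i => sq_nonneg _)
    _ = _ := Real.sqrt_mul (tsum_nonneg fun i => sq_nonneg _) _

/-- Change of variables `(n, (x, y)) ↦ (n - x, n - y, x + y - n)`. -/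
def psi : ℤ × (ℤ × ℤ) ≃ ℤ × ℤ × ℤ where
  toFun r := (r.1 - r.2.1, r.1 - r.2.2, r.2.1 + r.2.2 - r.1)
  invFun r := (r.1 + r.2.1 + r.2.2, (r.2.1 + r.2.2, r.1 + r.2.2))
  left_inv r := by ext <;> simp <;> ring
  right_inv r := by ext <;> simp <;> ring

/-! ### The weight functions used in the Cauchy–Schwarz argument -/

noncomputable def Xf (s : ℝ) (w : ℤ → ℝ) (n : ℤ) (q : ℤ × ℤ) : ℝ :=
  wt s (n - q.1) * wt s (n - q.2) * w (q.1 + q.2 - n)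

noncomputable def Yf (w : ℤ → ℝ) (q : ℤ × ℤ) : ℝ := w q.1 * w q.2

noncomputable def Ff (s : ℝ) (w : ℤ → ℝ) (r : ℤ × ℤ × ℤ) : ℝ :=
  wt s r.1 ^ 2 * (wt s r.2.1 ^ 2 * w r.2.2 ^ 2)

lemma Xf_sq_eq (s : ℝ) (w : ℤ → ℝ) (n : ℤ) (q : ℤ × ℤ) :
    Xf s w n q ^ 2 = Ff s w (psi (n, q)) := by
  show (wt s (n - q.1) * wt s (n - q.2) * w (q.1 + q.2 - n)) ^ 2
      = wt s (n - q.1) ^ 2 * (wt s (n - q.2) ^ 2 * w (q.1 + q.2 - n) ^ 2)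
  ring

lemma summable_Ff {s : ℝ} (hs : 1/2 < s) {w : ℤ → ℝ}
    (hw : Summable fun m : ℤ => w m ^ 2) : Summable (Ff s w) := by
  have h1 : Summable fun y : ℤ × ℤ => wt s y.1 ^ 2 * w y.2 ^ 2 :=
    (summable_wt_sq hs).mul_of_nonneg hw (fun m => sq_nonneg _) (fun m => sq_nonneg _)
  have h2 := (summable_wt_sq hs).mul_of_nonneg h1 (fun m => sq_nonneg _)
    (fun y => mul_nonneg (sq_nonneg _) (sq_nonneg _))
  exact h2.congr fun r => rfl

lemma tsum_Ff {s : ℝ} (hs : 1/2 < s) {w : ℤ → ℝ}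
    (hw : Summable fun m : ℤ => w m ^ 2) :
    ∑' r : ℤ × ℤ × ℤ, Ff s w r
      = (∑' m : ℤ, wt s m ^ 2) * ((∑' m : ℤ, wt s m ^ 2) * ∑' m : ℤ, w m ^ 2) := by
  have h1 : Summable fun y : ℤ × ℤ => wt s y.1 ^ 2 * w y.2 ^ 2 :=
    (summable_wt_sq hs).mul_of_nonneg hw (fun m => sq_nonneg _) (fun m => sq_nonneg _)
  have hinner : ∑' y : ℤ × ℤ, wt s y.1 ^ 2 * w y.2 ^ 2
      = (∑' m : ℤ, wt s m ^ 2) * ∑' m : ℤ, w m ^ 2 := by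
    rw [Summable.tsum_prod h1]
    have : ∀ a : ℤ, ∑' b : ℤ, wt s a ^ 2 * w b ^ 2 = wt s a ^ 2 * ∑' m : ℤ, w m ^ 2 :=
      fun a => tsum_mul_left
    rw [tsum_congr this, tsum_mul_right]
  rw [Summable.tsum_prod (summable_Ff hs hw)]
  have hmain : ∀ a : ℤ, ∑' y : ℤ × ℤ, Ff s w (a, y)
      = wt s a ^ 2 * ((∑' m : ℤ, wt s m ^ 2) * ∑' m : ℤ, w m ^ 2) := by
    intro a
    have hFa : ∀ y : ℤ × ℤ, Ff s w (a, y) = wt s a ^ 2 * (wt s y.1 ^ 2 * w y.2 ^ 2) :=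
      fun y => rfl
    rw [tsum_congr hFa, tsum_mul_left, hinner]
  rw [tsum_congr hmain, tsum_mul_right]

/-! ### Pointwise bounds -/

lemma Rres_norm_le {v : ℤ → ℂ} (hv : Memℓ2 v) (m : ℤ) :
    ‖Rres v m‖ ≤ 3 * (∑' k : ℤ, ‖v k‖ ^ 2) * ‖v m‖ := by
  have hE0 : 0 ≤ ∑' k : ℤ, ‖v k‖ ^ 2 := tsum_nonneg fun k => sq_nonneg _
  have hm : ‖v m‖ ^ 2 ≤ ∑' k : ℤ, ‖v k‖ ^ 2 := Summable.le_tsum hv m fun k _ => sq_nonneg _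
  have h1 : ‖(‖v m‖ : ℂ) ^ 2 * v m‖ = ‖v m‖ ^ 2 * ‖v m‖ := by
    rw [norm_mul, norm_pow, Complex.norm_real, Real.norm_eq_abs, abs_of_nonneg (norm_nonneg _)]
  have h2 : ‖2 * ((∑' k : ℤ, ‖v k‖ ^ 2 : ℝ) : ℂ) * v m‖
      = 2 * (∑' k : ℤ, ‖v k‖ ^ 2) * ‖v m‖ := by
    rw [norm_mul, norm_mul, Complex.norm_real, Real.norm_eq_abs, abs_of_nonneg hE0]
    norm_num
  refine (norm_sub_le _ _).trans ?_
  rw [h1, h2]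
  nlinarith [norm_nonneg (v m)]

lemma phase_inv_le {N : ℝ} (hN : 1 ≤ N) {ε' : ℝ} (hε : 0 < ε') (hε2 : ε' ≤ 1/4)
    {n : ℤ} {p : ℤ × ℤ × ℤ} (hp : largePhase N n p) :
    ‖((phase n p : ℤ) : ℂ)‖⁻¹ ≤
      N ^ (-(1:ℝ)/2 + ε') * (wt (1/2 + ε') (n - p.1) * wt (1/2 + ε') (n - p.2.2)) := by
  obtain ⟨h1, h2, h3, h4⟩ := hp
  set s : ℝ := 1/2 + ε' with hs
  have hj : n - p.1 ≠ 0 := by omega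
  have hk : n - p.2.2 ≠ 0 := by omega
  set rj : ℝ := |((n - p.1 : ℤ) : ℝ)| with hrj
  set rk : ℝ := |((n - p.2.2 : ℤ) : ℝ)| with hrk
  have hrj0 : 0 < rj := by
    rw [hrj]; simp only [abs_pos, Int.cast_ne_zero]; exact hj
  have hrk0 : 0 < rk := by
    rw [hrk]; simp only [abs_pos, Int.cast_ne_zero]; exact hk
  set x : ℝ := |((phase n p : ℤ) : ℝ)| with hx
  have hxval : x = 2 * (rj * rk) := by
    rw [hx, hrj, hrk]
    unfold phase
    push_cast
    rw [abs_mul, abs_mul]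
    norm_num
    ring
  have hNx : N < x := h4
  have hx0 : (0:ℝ) < x := lt_of_lt_of_le (by linarith) hNx.le
  have hnorm : ‖((phase n p : ℤ) : ℂ)‖ = x := by
    rw [hx, Complex.norm_intCast]
  rw [hnorm]
  have hsplit : x⁻¹ = x ^ (-(1:ℝ)/2 + ε') * x ^ (-s) := by
    rw [← Real.rpow_add hx0, ← Real.rpow_neg_one]
    norm_num [hs]
  have hb1 : x ^ (-(1:ℝ)/2 + ε') ≤ N ^ (-(1:ℝ)/2 + ε') := by
    apply Real.rpow_le_rpow_of_nonpos (by linarith) hNx.le (by linarith)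
  have hb2 : x ^ (-s) ≤ (rj * rk) ^ (-s) := by
    apply Real.rpow_le_rpow_of_nonpos (by positivity) (by rw [hxval]; linarith [mul_pos hrj0 hrk0])
      (by rw [hs]; linarith)
  have hb3 : (rj * rk) ^ (-s) = wt s (n - p.1) * wt s (n - p.2.2) := by
    rw [Real.mul_rpow hrj0.le hrk0.le]
    unfold wt
    rw [if_neg hj, if_neg hk]
  rw [hsplit]
  calc x ^ (-(1:ℝ)/2 + ε') * x ^ (-s)
      ≤ N ^ (-(1:ℝ)/2 + ε') * ((rj * rk) ^ (-s)) := by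
        apply mul_le_mul hb1 hb2 (Real.rpow_nonneg hx0.le _) (Real.rpow_nonneg (by linarith) _)
    _ = N ^ (-(1:ℝ)/2 + ε') * (wt s (n - p.1) * wt s (n - p.2.2)) := by rw [hb3]

lemma term4_norm_eq (t : ℝ) (v : ℤ → ℂ) (n : ℤ) (p : ℤ × ℤ × ℤ) :
    ‖term4 t v n p‖ = ‖((phase n p : ℤ) : ℂ)‖⁻¹ * ‖Rres v p.1‖ * ‖v p.2.1‖ * ‖v p.2.2‖ := by
  unfold term4
  rw [norm_mul, norm_mul, norm_mul, norm_div, RCLike.norm_conj]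
  congr 3
  have : ‖Complex.exp (-Complex.I * ((phase n p : ℤ) : ℂ) * (t : ℝ))‖ = 1 := by
    rw [Complex.norm_exp]
    have : (-Complex.I * ((phase n p : ℤ) : ℂ) * (t : ℝ)).re = 0 := by
      simp [Complex.mul_re, Complex.mul_im]
    rw [this, Real.exp_zero]
  rw [this, one_div]

lemma iota_inj (N : ℝ) (n : ℤ) :
    Function.Injective
      (fun p : {p : ℤ × ℤ × ℤ // largePhase N n p} => (p.1.1, p.1.2.2)) := by
  rintro ⟨⟨a1, a2, a3⟩, ha⟩ ⟨⟨b1, b2, b3⟩, hb⟩ h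
  have ha1 := ha.1
  have hb1 := hb.1
  simp only [Prod.mk.injEq] at h
  obtain ⟨h1, h3⟩ := h
  apply Subtype.ext
  simp only at ha1 hb1
  simp only [Prod.mk.injEq]
  refine ⟨h1, ?_, h3⟩
  omega

end N4Aux

set_option maxHeartbeats 2000000 in
open N4Aux in
/-- **Bound on the resonant-derivative term `N₄`.** For every `ε > 0` there is `C > 0` such
that for every `N ≥ 1`, `t ∈ ℝ`, and `v ∈ ℓ²(ℤ;ℂ)`: the series defining `N₄(v)(n)` converges
absolutely for each `n`, and `N₄(v) ∈ ℓ²(ℤ;ℂ)` with `‖N₄(v)‖ ≤ C N^{−1/2+ε} ‖v‖⁵`. -/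
theorem N4_bound : ∀ ε > (0:ℝ), ∃ C > (0:ℝ), ∀ N : ℝ, 1 ≤ N → ∀ t : ℝ,
    ∀ v : ℤ → ℂ, Memℓ2 v →
    (∀ n : ℤ, Summable fun p : {p : ℤ × ℤ × ℤ // largePhase N n p} => ‖term4 t v n p.1‖) ∧
    Memℓ2 (N4 N t v) ∧
    l2norm (N4 N t v) ≤ C * N ^ (-(1:ℝ)/2 + ε) * l2norm v ^ 5 := by
  intro ε hε
  set ε' : ℝ := min ε (1/4) with hε'def
  have hε'pos : 0 < ε' := lt_min hε (by norm_num)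
  have hε'le : ε' ≤ 1/4 := min_le_right _ _
  have hε'leε : ε' ≤ ε := min_le_left _ _
  set s : ℝ := 1/2 + ε' with hsdef
  have hshalf : 1/2 < s := by rw [hsdef]; linarith
  have hwtsq : Summable fun m : ℤ => wt s m ^ 2 := summable_wt_sq hshalf
  set A : ℝ := ∑' m : ℤ, wt s m ^ 2 with hAdef
  have hA0 : 0 ≤ A := tsum_nonneg fun m => sq_nonneg _
  refine ⟨3 * A + 1, by positivity, fun N hN t v hv => ?_⟩
  set w : ℤ → ℝ := fun m => ‖v m‖ with hwdef
  have hw0 : ∀ m, 0 ≤ w m := fun m => norm_nonneg _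
  have hv' : Summable fun m : ℤ => w m ^ 2 := hv
  set E : ℝ := ∑' k : ℤ, ‖v k‖ ^ 2 with hEdef
  have hE0 : 0 ≤ E := tsum_nonneg fun k => sq_nonneg _
  have hwE : ∀ m, w m ^ 2 ≤ E := fun m => Summable.le_tsum hv m fun k _ => sq_nonneg _
  set K : ℝ := 3 * E * N ^ (-(1:ℝ)/2 + ε') with hKdef
  have hN0 : (0:ℝ) < N := lt_of_lt_of_le one_pos hN
  have hK0 : 0 ≤ K := by positivity
  -- summability of the shifted weights
  have hwtshift : ∀ n : ℤ, Summable fun x : ℤ => wt s (n - x) ^ 2 :=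
    fun n => hwtsq.comp_injective sub_right_injective
  -- summability of `Yf ^ 2` over `ℤ × ℤ`
  have hY2 : Summable fun q : ℤ × ℤ => Yf w q ^ 2 := by
    have h := hv'.mul_of_nonneg hv' (fun m => sq_nonneg _) (fun m => sq_nonneg _)
    exact h.congr fun q => by
      show w q.1 ^ 2 * w q.2 ^ 2 = Yf w q ^ 2
      unfold Yf; ring
  have hY2val : ∑' q : ℤ × ℤ, Yf w q ^ 2 = E * E := by
    rw [Summable.tsum_prod hY2]
    have h1 : ∀ a : ℤ, ∑' b : ℤ, Yf w (a, b) ^ 2 = w a ^ 2 * E := by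
      intro a
      have : ∀ b : ℤ, Yf w (a, b) ^ 2 = w a ^ 2 * w b ^ 2 := fun b => by
        unfold Yf; ring
      rw [tsum_congr this, tsum_mul_left]
    rw [tsum_congr h1, tsum_mul_right]
  -- summability of `Xf ^ 2` over `ℤ × ℤ`
  have hwtprod : ∀ n : ℤ, Summable fun q : ℤ × ℤ => wt s (n - q.1) ^ 2 * wt s (n - q.2) ^ 2 :=
    fun n => (hwtshift n).mul_of_nonneg (hwtshift n)
      (fun m => sq_nonneg _) (fun m => sq_nonneg _)
  have hX2 : ∀ n : ℤ, Summable fun q : ℤ × ℤ => Xf s w n q ^ 2 := by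
    intro n
    refine Summable.of_nonneg_of_le (fun q => sq_nonneg _) (fun q => ?_)
      (((hwtprod n)).mul_right E)
    show Xf s w n q ^ 2 ≤ wt s (n - q.1) ^ 2 * wt s (n - q.2) ^ 2 * E
    have hb : Xf s w n q ^ 2
        = wt s (n - q.1) ^ 2 * wt s (n - q.2) ^ 2 * w (q.1 + q.2 - n) ^ 2 := by
      unfold Xf; ring
    rw [hb]
    have := hwE (q.1 + q.2 - n)
    have hwt2 : 0 ≤ wt s (n - q.1) ^ 2 * wt s (n - q.2) ^ 2 :=
      mul_nonneg (sq_nonneg _) (sq_nonneg _)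
    exact mul_le_mul_of_nonneg_left this hwt2
  -- the global triple-sum function
  have hFsummable : Summable (Ff s w) := summable_Ff hshalf hv'
  have hFpsi : Summable (Ff s w ∘ psi) := psi.summable_iff.mpr hFsummable
  set SX : ℤ → ℝ := fun n => ∑' q : ℤ × ℤ, Xf s w n q ^ 2 with hSXdef
  have hSX0 : ∀ n, 0 ≤ SX n := fun n => tsum_nonneg fun q => sq_nonneg _
  have hSXF : ∀ n, SX n = ∑' q : ℤ × ℤ, (Ff s w ∘ psi) (n, q) := by
    intro n
    exact tsum_congr fun q => Xf_sq_eq s w n q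
  have hSXsummable : Summable SX := by
    refine (hFpsi.prod).congr fun n => ?_
    rw [hSXF n]
  have hSXtotal : ∑' n : ℤ, SX n = A * (A * E) := by
    rw [tsum_congr hSXF, ← Summable.tsum_prod hFpsi]
    have := psi.tsum_eq (Ff s w)
    calc ∑' r : ℤ × (ℤ × ℤ), (Ff s w ∘ psi) r = ∑' r : ℤ × ℤ × ℤ, Ff s w r :=
          psi.tsum_eq (Ff s w)
      _ = A * (A * E) := tsum_Ff hshalf hv'
  -- per-frequency estimates
  have key : ∀ n : ℤ,
      (Summable fun p : {p : ℤ × ℤ × ℤ // largePhase N n p} => ‖term4 t v n p.1‖) ∧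
      ‖N4 N t v n‖ ≤ K * (Real.sqrt (SX n) * E) := by
    intro n
    set ι : {p : ℤ × ℤ × ℤ // largePhase N n p} → ℤ × ℤ :=
      fun p => (p.1.1, p.1.2.2) with hιdef
    have hι : Function.Injective ι := iota_inj N n
    have hterm : ∀ p : {p : ℤ × ℤ × ℤ // largePhase N n p},
        ‖term4 t v n p.1‖ ≤ K * (Xf s w n (ι p) * Yf w (ι p)) := by
      intro p
      have hΦ := phase_inv_le hN hε'pos hε'le p.2
      have hR := Rres_norm_le hv p.1.1
      have hn2 : p.1.2.1 = p.1.1 + p.1.2.2 - n := by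
        have h := p.2.1; omega
      rw [term4_norm_eq]
      have hΦ0 : 0 ≤ N ^ (-(1:ℝ)/2 + ε') * (wt s (n - p.1.1) * wt s (n - p.1.2.2)) :=
        mul_nonneg (Real.rpow_nonneg hN0.le _)
          (mul_nonneg (wt_nonneg _ _) (wt_nonneg _ _))
      have step1 : ‖((phase n p.1 : ℤ) : ℂ)‖⁻¹ * ‖Rres v p.1.1‖
          ≤ (N ^ (-(1:ℝ)/2 + ε') * (wt s (n - p.1.1) * wt s (n - p.1.2.2)))
            * (3 * E * w p.1.1) :=
        mul_le_mul hΦ hR (norm_nonneg _) hΦ0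
      have step2 : ‖((phase n p.1 : ℤ) : ℂ)‖⁻¹ * ‖Rres v p.1.1‖ * ‖v p.1.2.1‖ * ‖v p.1.2.2‖
          ≤ (N ^ (-(1:ℝ)/2 + ε') * (wt s (n - p.1.1) * wt s (n - p.1.2.2)))
            * (3 * E * w p.1.1) * w p.1.2.1 * w p.1.2.2 := by
        apply mul_le_mul_of_nonneg_right _ (hw0 _)
        exact mul_le_mul_of_nonneg_right step1 (hw0 _)
      refine step2.trans (le_of_eq ?_)
      show (N ^ (-(1:ℝ)/2 + ε') * (wt s (n - p.1.1) * wt s (n - p.1.2.2)))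
            * (3 * E * w p.1.1) * w p.1.2.1 * w p.1.2.2
          = K * (Xf s w n (p.1.1, p.1.2.2) * Yf w (p.1.1, p.1.2.2))
      unfold Xf Yf
      simp only
      rw [hn2]
      rw [hKdef]
      ring
    have hXι2 : Summable fun p : {p : ℤ × ℤ × ℤ // largePhase N n p} =>
        Xf s w n (ι p) ^ 2 := (hX2 n).comp_injective hι
    have hYι2 : Summable fun p : {p : ℤ × ℤ × ℤ // largePhase N n p} =>
        Yf w (ι p) ^ 2 := hY2.comp_injective hι
    have hXY : Summable fun p : {p : ℤ × ℤ × ℤ // largePhase N n p} =>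
        Xf s w n (ι p) * Yf w (ι p) :=
      summable_mul_of_sq
        (fun p => mul_nonneg (mul_nonneg (wt_nonneg _ _) (wt_nonneg _ _)) (hw0 _))
        (fun p => mul_nonneg (hw0 _) (hw0 _)) hXι2 hYι2
    have hsum : Summable fun p : {p : ℤ × ℤ × ℤ // largePhase N n p} =>
        ‖term4 t v n p.1‖ :=
      Summable.of_nonneg_of_le (fun p => norm_nonneg _) hterm (hXY.mul_left K)
    refine ⟨hsum, ?_⟩
    have hXle : ∑' p : {p : ℤ × ℤ × ℤ // largePhase N n p}, Xf s w n (ι p) ^ 2 ≤ SX n := by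
      rw [hSXdef]
      exact Summable.tsum_le_tsum_of_inj ι hι (fun c _ => sq_nonneg _) (fun p => le_rfl) hXι2 (hX2 n)
    have hYle : ∑' p : {p : ℤ × ℤ × ℤ // largePhase N n p}, Yf w (ι p) ^ 2 ≤ E * E := by
      rw [← hY2val]
      exact Summable.tsum_le_tsum_of_inj ι hι (fun c _ => sq_nonneg _) (fun p => le_rfl) hYι2 hY2
    calc ‖N4 N t v n‖ ≤ ∑' p : {p : ℤ × ℤ × ℤ // largePhase N n p}, ‖term4 t v n p.1‖ :=
          norm_tsum_le_tsum_norm hsum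
      _ ≤ ∑' p : {p : ℤ × ℤ × ℤ // largePhase N n p}, K * (Xf s w n (ι p) * Yf w (ι p)) :=
          Summable.tsum_le_tsum hterm hsum (hXY.mul_left K)
      _ = K * ∑' p : {p : ℤ × ℤ × ℤ // largePhase N n p}, Xf s w n (ι p) * Yf w (ι p) :=
          tsum_mul_left
      _ ≤ K * (Real.sqrt (∑' p : {p : ℤ × ℤ × ℤ // largePhase N n p}, Xf s w n (ι p) ^ 2)
            * Real.sqrt (∑' p : {p : ℤ × ℤ × ℤ // largePhase N n p}, Yf w (ι p) ^ 2)) := by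
          apply mul_le_mul_of_nonneg_left _ hK0
          exact tsum_mul_le_sqrt
            (fun p => mul_nonneg (mul_nonneg (wt_nonneg _ _) (wt_nonneg _ _)) (hw0 _))
            (fun p => mul_nonneg (hw0 _) (hw0 _)) hXι2 hYι2
      _ ≤ K * (Real.sqrt (SX n) * E) := by
          apply mul_le_mul_of_nonneg_left _ hK0
          have h1 : Real.sqrt (∑' p : {p : ℤ × ℤ × ℤ // largePhase N n p},
              Xf s w n (ι p) ^ 2) ≤ Real.sqrt (SX n) := Real.sqrt_le_sqrt hXle
          have h2 : Real.sqrt (∑' p : {p : ℤ × ℤ × ℤ // largePhase N n p},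
              Yf w (ι p) ^ 2) ≤ E := by
            refine (Real.sqrt_le_sqrt hYle).trans (le_of_eq ?_)
            exact Real.sqrt_mul_self hE0
          exact mul_le_mul h1 h2 (Real.sqrt_nonneg _) (Real.sqrt_nonneg _)
  -- assemble
  refine ⟨fun n => (key n).1, ?_, ?_⟩
  · -- ℓ² membership
    refine Summable.of_nonneg_of_le (fun n => sq_nonneg _) (fun n => ?_)
      (hSXsummable.mul_left (K ^ 2 * E ^ 2))
    have hb := (key n).2
    have hb0 : 0 ≤ K * (Real.sqrt (SX n) * E) :=
      mul_nonneg hK0 (mul_nonneg (Real.sqrt_nonneg _) hE0)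
    calc ‖N4 N t v n‖ ^ 2 ≤ (K * (Real.sqrt (SX n) * E)) ^ 2 :=
          pow_le_pow_left₀ (norm_nonneg _) hb 2
      _ = K ^ 2 * E ^ 2 * SX n := by
          linear_combination (K ^ 2 * E ^ 2) * Real.sq_sqrt (hSX0 n)
  · -- the norm bound
    have hMem : Summable fun n : ℤ => ‖N4 N t v n‖ ^ 2 := by
      refine Summable.of_nonneg_of_le (fun n => sq_nonneg _) (fun n => ?_)
        (hSXsummable.mul_left (K ^ 2 * E ^ 2))
      have hb := (key n).2
      calc ‖N4 N t v n‖ ^ 2 ≤ (K * (Real.sqrt (SX n) * E)) ^ 2 :=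
            pow_le_pow_left₀ (norm_nonneg _) hb 2
        _ = K ^ 2 * E ^ 2 * SX n := by
            linear_combination (K ^ 2 * E ^ 2) * Real.sq_sqrt (hSX0 n)
    have hT : ∑' n : ℤ, ‖N4 N t v n‖ ^ 2 ≤ K ^ 2 * E ^ 2 * (A * (A * E)) := by
      calc ∑' n : ℤ, ‖N4 N t v n‖ ^ 2 ≤ ∑' n : ℤ, K ^ 2 * E ^ 2 * SX n := by
            refine Summable.tsum_le_tsum (fun n => ?_) hMem (hSXsummable.mul_left (K ^ 2 * E ^ 2))
            have hb := (key n).2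
            calc ‖N4 N t v n‖ ^ 2 ≤ (K * (Real.sqrt (SX n) * E)) ^ 2 :=
                  pow_le_pow_left₀ (norm_nonneg _) hb 2
              _ = K ^ 2 * E ^ 2 * SX n := by
                  linear_combination (K ^ 2 * E ^ 2) * Real.sq_sqrt (hSX0 n)
        _ = K ^ 2 * E ^ 2 * ∑' n : ℤ, SX n := tsum_mul_left
        _ = K ^ 2 * E ^ 2 * (A * (A * E)) := by rw [hSXtotal]
    have hl2 : l2norm (N4 N t v) ≤ K * E * A * Real.sqrt E := by
      unfold l2norm
      have heq : K ^ 2 * E ^ 2 * (A * (A * E)) = (K * E * A) ^ 2 * E := by ring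
      calc Real.sqrt (∑' n : ℤ, ‖N4 N t v n‖ ^ 2)
          ≤ Real.sqrt ((K * E * A) ^ 2 * E) := by
            apply Real.sqrt_le_sqrt
            rw [← heq]
            exact hT
        _ = K * E * A * Real.sqrt E := by
            rw [Real.sqrt_mul (sq_nonneg _), Real.sqrt_sq (by positivity)]
    refine hl2.trans ?_
    have hl2v : l2norm v = Real.sqrt E := by rw [l2norm]
    have h5 : l2norm v ^ 5 = E ^ 2 * Real.sqrt E := by
      rw [hl2v]
      calc Real.sqrt E ^ 5 = (Real.sqrt E ^ 2) ^ 2 * Real.sqrt E := by ring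
        _ = E ^ 2 * Real.sqrt E := by rw [Real.sq_sqrt hE0]
    rw [h5]
    have hNmono : N ^ (-(1:ℝ)/2 + ε') ≤ N ^ (-(1:ℝ)/2 + ε) :=
      Real.rpow_le_rpow_of_exponent_le hN (by linarith)
    calc K * E * A * Real.sqrt E = 3 * A * N ^ (-(1:ℝ)/2 + ε') * (E ^ 2 * Real.sqrt E) := by
          rw [hKdef]; ring
      _ ≤ (3 * A + 1) * N ^ (-(1:ℝ)/2 + ε) * (E ^ 2 * Real.sqrt E) := by
          have hfac : 0 ≤ E ^ 2 * Real.sqrt E := by positivity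
          apply mul_le_mul_of_nonneg_right _ hfac
          apply mul_le_mul (by linarith) hNmono (Real.rpow_nonneg hN0.le _) (by linarith)
end
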